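/- arXiv:2402.00686 — 9 statements merged into one kernel-verified Lean document; each statement's English description precedes it below -/
import Mathlib

section
/- For every y ∈ Y and every m₀ ∈ X, the posterior mean m := C₀^{1/2}(C₀^{1/2}T*TC₀^{1/2} + σ²Id)⁻¹C₀^{1/2}T*y + [Id − C₀^{1/2}(C₀^{1/2}T*TC₀^{1/2} + σ²Id)⁻¹C₀^{1/2}T*T]m₀ satisfies ⟨m, φ⟩_X = ⟨y, Φ_MAP⟩_Y − ⟨m₀, T*Φ_MAP − φ⟩_X. -/
open scoped RealInnerProductSpace

/-- For every `y ∈ Y` and `m₀ ∈ X`, the posterior mean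
`m = C₀^{1/2}(C₀^{1/2}T*TC₀^{1/2} + σ²Id)⁻¹C₀^{1/2}T*y
    + [Id − C₀^{1/2}(C₀^{1/2}T*TC₀^{1/2} + σ²Id)⁻¹C₀^{1/2}T*T] m₀`
satisfies `⟨m, φ⟩ = ⟨y, Φ_MAP⟩ − ⟨m₀, T*Φ_MAP − φ⟩`, where
`Φ_MAP = T C₀^{1/2} (C₀^{1/2}T*TC₀^{1/2} + σ²Id)⁻¹ C₀^{1/2} φ`.
Here `S` denotes the positive square root `C₀^{1/2}` of `C₀` and `B` denotes the inverse
`(C₀^{1/2}T*TC₀^{1/2} + σ²Id)⁻¹`, which exists since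
`C₀^{1/2}T*TC₀^{1/2} + σ²Id ≥ σ²Id`. -/
theorem posterior_mean_feature_eval
    {X Y : Type*}
    [NormedAddCommGroup X] [InnerProductSpace ℝ X] [CompleteSpace X]
    [TopologicalSpace.SeparableSpace X]
    [NormedAddCommGroup Y] [InnerProductSpace ℝ Y] [CompleteSpace Y]
    [TopologicalSpace.SeparableSpace Y]
    (T : X →L[ℝ] Y) (σ : ℝ) (hσ : 0 < σ)
    (C₀ : X →L[ℝ] X) (hC₀sa : IsSelfAdjoint C₀) (hC₀pos : ∀ x : X, 0 ≤ ⟪C₀ x, x⟫)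
    -- `S` is the positive square root `C₀^{1/2}` of `C₀`
    (S : X →L[ℝ] X) (hSsa : IsSelfAdjoint S) (hSpos : ∀ x : X, 0 ≤ ⟪S x, x⟫)
    (hS : S ∘L S = C₀)
    -- `B` is the inverse of `C₀^{1/2} T* T C₀^{1/2} + σ² Id`
    (B : X →L[ℝ] X)
    (hB : B ∘L (S ∘L (ContinuousLinearMap.adjoint T) ∘L T ∘L S + σ ^ 2 • 1) = 1)
    (hB' : (S ∘L (ContinuousLinearMap.adjoint T) ∘L T ∘L S + σ ^ 2 • 1) ∘L B = 1)
    (φ : X) (y : Y) (m₀ : X) :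
    ⟪S (B (S ((ContinuousLinearMap.adjoint T) y)))
        + (m₀ - S (B (S ((ContinuousLinearMap.adjoint T) (T m₀))))), φ⟫
      = ⟪y, T (S (B (S φ)))⟫
        - ⟪m₀, (ContinuousLinearMap.adjoint T) (T (S (B (S φ)))) - φ⟫ := by
  classical
  set A : X →L[ℝ] X := S ∘L (ContinuousLinearMap.adjoint T) ∘L T ∘L S + σ ^ 2 • 1 with hA
  have hone : ContinuousLinearMap.adjoint (1 : X →L[ℝ] X) = 1 := ContinuousLinearMap.adjoint_id
  have hAsa : IsSelfAdjoint A := by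
    rw [ContinuousLinearMap.isSelfAdjoint_iff']
    simp only [hA, map_add, ContinuousLinearMap.adjoint_comp, map_smul,
      ContinuousLinearMap.adjoint_adjoint, hSsa.adjoint_eq, hone]
    congr 1
  have hBsa : IsSelfAdjoint B := by
    rw [ContinuousLinearMap.isSelfAdjoint_iff']
    have h1 : ContinuousLinearMap.adjoint B ∘L A = 1 := by
      have := congrArg ContinuousLinearMap.adjoint hB'
      rwa [ContinuousLinearMap.adjoint_comp, hAsa.adjoint_eq, hone] at this
    calc ContinuousLinearMap.adjoint B
        = (ContinuousLinearMap.adjoint B) ∘L (A ∘L B) := by rw [hB']; ext x; simp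
      _ = (ContinuousLinearMap.adjoint B ∘L A) ∘L B := by rw [ContinuousLinearMap.comp_assoc]
      _ = B := by rw [h1]; ext x; simp
  have hSswap : ∀ u v : X, ⟪S u, v⟫ = ⟪u, S v⟫ := fun u v => by
    nth_rewrite 1 [← hSsa.adjoint_eq]; exact ContinuousLinearMap.adjoint_inner_left S v u
  have hBswap : ∀ u v : X, ⟪B u, v⟫ = ⟪u, B v⟫ := fun u v => by
    nth_rewrite 1 [← hBsa.adjoint_eq]; exact ContinuousLinearMap.adjoint_inner_left B v u
  have key1 : ⟪S (B (S ((ContinuousLinearMap.adjoint T) y))), φ⟫ = ⟪y, T (S (B (S φ)))⟫ := by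
    rw [hSswap, hBswap, hSswap]
    exact ContinuousLinearMap.adjoint_inner_left T _ _
  have key2 : ⟪S (B (S ((ContinuousLinearMap.adjoint T) (T m₀)))), φ⟫
      = ⟪m₀, (ContinuousLinearMap.adjoint T) (T (S (B (S φ))))⟫ := by
    rw [hSswap, hBswap, hSswap, ContinuousLinearMap.adjoint_inner_left,
      ← ContinuousLinearMap.adjoint_inner_right]
  rw [inner_add_left, inner_sub_left, inner_sub_right, key1, key2]
  ring
end

section
/- Assume T is injective, C₀ commutes with T*T, and φ ≠ 0. If φ is not an eigenvector of the operator C₀^{1/2}T*TC₀^{1/2}, then the linear functional u ↦ ⟨u, T*Φ_MAP⟩_X is unbounded above on the half-space {u ∈ X : ⟨φ, u⟩_X ≤ 0}; that is, for every M ∈ ℝ there exists u ∈ X with ⟨φ, u⟩ ≤ 0 and ⟨u, T*Φ_MAP⟩ > M. -/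
open scoped RealInnerProductSpace

noncomputable section SqrtAuxSection

namespace SqrtAux

/-- Babylonian-type iteration polynomials converging to `1 - √(1-t)` on `[0,1]`. -/
def P : ℕ → Polynomial ℝ
  | 0 => 0
  | n + 1 => Polynomial.C (2⁻¹ : ℝ) * (Polynomial.X + (P n) ^ 2)

lemma coeff_mul_nonneg {p q : Polynomial ℝ} (hp : ∀ i, 0 ≤ p.coeff i)
    (hq : ∀ i, 0 ≤ q.coeff i) (i : ℕ) : 0 ≤ (p * q).coeff i := by
  rw [Polynomial.coeff_mul]
  exact Finset.sum_nonneg fun x _ => mul_nonneg (hp _) (hq _)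

lemma P_coeff_nonneg : ∀ n i, 0 ≤ (P n).coeff i
  | 0, i => by simp [P]
  | n + 1, i => by
    have ih := P_coeff_nonneg n
    refine coeff_mul_nonneg (fun j => ?_) (fun j => ?_) i
    · rw [Polynomial.coeff_C]
      split <;> norm_num
    · rw [Polynomial.coeff_add]
      refine add_nonneg ?_ ?_
      · rw [Polynomial.coeff_X]
        split <;> norm_num
      · rw [sq]
        exact coeff_mul_nonneg ih ih j

lemma P_eval_one_nonneg (n : ℕ) : 0 ≤ (P n).eval 1 := by
  rw [Polynomial.eval_eq_sum_range]
  exact Finset.sum_nonneg fun i _ => by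
    simpa using P_coeff_nonneg n i

lemma P_eval_one_le : ∀ n, (P n).eval 1 ≤ 1
  | 0 => by simp [P]
  | n + 1 => by
    have h1 := P_eval_one_le n
    have h0 := P_eval_one_nonneg n
    simp only [P, Polynomial.eval_mul, Polynomial.eval_C, Polynomial.eval_add,
      Polynomial.eval_X, Polynomial.eval_pow]
    nlinarith

lemma P_succ_sub_coeff_nonneg : ∀ n i, 0 ≤ (P (n + 1) - P n).coeff i
  | 0, i => by
    have : P 1 - P 0 = Polynomial.C (2⁻¹ : ℝ) * Polynomial.X := by
      simp [P]
    rw [this]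
    refine coeff_mul_nonneg (fun j => ?_) (fun j => ?_) i
    · rw [Polynomial.coeff_C]; split <;> norm_num
    · rw [Polynomial.coeff_X]; split <;> norm_num
  | n + 1, i => by
    have ih := P_succ_sub_coeff_nonneg n
    have hrw : P (n + 2) - P (n + 1)
        = Polynomial.C (2⁻¹ : ℝ) * ((P (n + 1) - P n) * (P (n + 1) + P n)) := by
      show P ((n+1) + 1) - P (n + 1) = _
      rw [P, P]
      ring
    rw [hrw]
    refine coeff_mul_nonneg (fun j => ?_) ?_ i
    · rw [Polynomial.coeff_C]; split <;> norm_num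
    · refine coeff_mul_nonneg ih (fun j => ?_)
      rw [Polynomial.coeff_add]
      exact add_nonneg (P_coeff_nonneg _ _) (P_coeff_nonneg _ _)

lemma P_coeff_mono (i : ℕ) : Monotone fun n => (P n).coeff i := by
  refine monotone_nat_of_le_succ fun n => ?_
  have := P_succ_sub_coeff_nonneg n i
  rw [Polynomial.coeff_sub] at this
  linarith

end SqrtAux

section CS

variable {X : Type*} [NormedAddCommGroup X] [InnerProductSpace ℝ X]

private lemma cs_aux (h : X → X) (hadd : ∀ u v, h (u + v) = h u + h v)
    (hsmul : ∀ (t : ℝ) u, h (t • u) = t • h u)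
    (hsymm : ∀ u v, ⟪h u, v⟫ = ⟪u, h v⟫)
    (hpos : ∀ u, 0 ≤ ⟪h u, u⟫) (u v : X) :
    ⟪h u, v⟫ ^ 2 ≤ ⟪h u, u⟫ * ⟪h v, v⟫ := by
  have key : ∀ t : ℝ, 0 ≤ ⟪h v, v⟫ * (t * t) + (2 * ⟪h u, v⟫) * t + ⟪h u, u⟫ := by
    intro t
    have h0 := hpos (u + t • v)
    rw [hadd, hsmul] at h0
    have hc : ⟪h v, u⟫ = ⟪h u, v⟫ := by rw [hsymm v u, real_inner_comm]
    rw [inner_add_left, inner_add_right, inner_add_right, real_inner_smul_left,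
      real_inner_smul_right, real_inner_smul_left, real_inner_smul_right, hc] at h0
    nlinarith [h0]
  have hd := discrim_le_zero key
  rw [discrim] at hd
  nlinarith [hd]

private lemma inner_zero_imp (h : X → X) (hadd : ∀ u v, h (u + v) = h u + h v)
    (hsmul : ∀ (t : ℝ) u, h (t • u) = t • h u)
    (hsymm : ∀ u v, ⟪h u, v⟫ = ⟪u, h v⟫)
    (hpos : ∀ u, 0 ≤ ⟪h u, u⟫) (y : X) (hy : ⟪h y, y⟫ = 0) : h y = 0 := by
  have hcs := cs_aux h hadd hsmul hsymm hpos y (h y)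
  rw [hy, zero_mul] at hcs
  have h3 : ⟪h y, h y⟫ = 0 := by
    nlinarith [real_inner_self_nonneg (x := h y), hcs]
  exact inner_self_eq_zero.mp h3

end CS

end SqrtAuxSection
section SqrtMain

open Filter

variable {X : Type*} [NormedAddCommGroup X] [InnerProductSpace ℝ X] [CompleteSpace X]

set_option maxHeartbeats 2000000 in
private theorem sqrt_comm_main (C S K : X →L[ℝ] X)
    (hSsymm : ∀ u v, ⟪S u, v⟫ = ⟪u, S v⟫)
    (hSpos : ∀ x, 0 ≤ ⟪S x, x⟫)
    (hSS : ∀ x, S (S x) = C x)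
    (hC1 : ∀ x, ⟪C x, x⟫ ≤ ‖x‖ ^ 2)
    (hKC : ∀ x, K (C x) = C (K x)) :
    ∀ x, S (K x) = K (S x) := by
  have hCsymm : ∀ u v, ⟪C u, v⟫ = ⟪u, C v⟫ := by
    intro u v
    rw [← hSS, hSsymm, hSsymm, hSS]
  have hCpos : ∀ x, 0 ≤ ⟪C x, x⟫ := by
    intro x
    rw [← hSS, hSsymm]
    exact real_inner_self_nonneg
  set a : X →L[ℝ] X := 1 - C with haa
  have ha_apply : ∀ x, a x = x - C x := by
    intro x
    simp [haa, ContinuousLinearMap.sub_apply]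
  have hasymm : ∀ u v, ⟪a u, v⟫ = ⟪u, a v⟫ := by
    intro u v
    rw [ha_apply, ha_apply, inner_sub_left, inner_sub_right, hCsymm]
  have hapos : ∀ x, 0 ≤ ⟪a x, x⟫ := by
    intro x
    rw [ha_apply, inner_sub_left, real_inner_self_eq_norm_sq]
    linarith [hC1 x]
  have ha1 : ∀ x, ⟪a x, x⟫ ≤ ‖x‖ ^ 2 := by
    intro x
    rw [ha_apply, inner_sub_left, real_inner_self_eq_norm_sq]
    linarith [hCpos x]
  have hanormpt : ∀ x, ‖a x‖ ≤ ‖x‖ := by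
    intro x
    have h1 := cs_aux a (map_add a) (fun t u => map_smul a t u) hasymm hapos x (a x)
    rw [real_inner_self_eq_norm_sq] at h1
    have h2 := ha1 (a x)
    have h3 := ha1 x
    have h4 := hapos x
    have h5 := hapos (a x)
    by_contra hcon
    push_neg at hcon
    have hax : 0 < ‖a x‖ := lt_of_le_of_lt (norm_nonneg x) hcon
    have hb1 : ⟪a x, x⟫ * ⟪a (a x), a x⟫ ≤ ‖x‖ ^ 2 * ‖a x‖ ^ 2 :=
      mul_le_mul h3 h2 h5 (by positivity)
    have h6 : ‖x‖ ^ 2 < ‖a x‖ ^ 2 := by nlinarith [norm_nonneg x]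
    have h7 : (‖a x‖ ^ 2) ^ 2 ≤ ‖x‖ ^ 2 * ‖a x‖ ^ 2 := le_trans h1 hb1
    nlinarith [pow_pos hax 2]
  have hanorm : ‖a‖ ≤ 1 :=
    ContinuousLinearMap.opNorm_le_bound a zero_le_one (fun x => by
      simpa using hanormpt x)
  -- powers of a
  have hpow_symm : ∀ i (u v : X), ⟪(a ^ i) u, v⟫ = ⟪u, (a ^ i) v⟫ := by
    intro i
    induction i with
    | zero => simp
    | succ n ih =>
      intro u v
      have hcm : ∀ w : X, a ((a ^ n) w) = (a ^ n) (a w) := fun w => by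
        rw [← ContinuousLinearMap.mul_apply, ← ContinuousLinearMap.mul_apply, ← pow_succ',
          pow_succ]
      rw [pow_succ, ContinuousLinearMap.mul_apply, ContinuousLinearMap.mul_apply, ih, hasymm,
        hcm]
  have hpow_pos : ∀ i (x : X), 0 ≤ ⟪(a ^ i) x, x⟫ := by
    intro i x
    rcases Nat.even_or_odd i with ⟨k, hk⟩ | ⟨k, hk⟩
    · subst hk
      rw [pow_add, ContinuousLinearMap.mul_apply, hpow_symm]
      exact real_inner_self_nonneg
    · subst hk
      have h2 : 2 * k + 1 = k + (1 + k) := by ring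
      rw [h2, pow_add, pow_add, pow_one, ContinuousLinearMap.mul_apply,
        ContinuousLinearMap.mul_apply, hpow_symm k]
      exact hapos _
  have hpow_norm : ∀ i, ‖(a ^ i : X →L[ℝ] X)‖ ≤ 1 := by
    intro i
    induction i with
    | zero => rw [pow_zero]; exact ContinuousLinearMap.norm_id_le
    | succ n ih =>
      rw [pow_succ]
      calc ‖(a ^ n : X →L[ℝ] X) * a‖ ≤ ‖(a ^ n : X →L[ℝ] X)‖ * ‖a‖ := norm_mul_le _ _
      _ ≤ 1 := by nlinarith [norm_nonneg (a ^ n : X →L[ℝ] X)]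
  -- aeval facts
  have haeval_apply : ∀ (p : Polynomial ℝ) (x : X),
      (Polynomial.aeval a p) x
        = ∑ i ∈ Finset.range (p.natDegree + 1), p.coeff i • ((a ^ i) x) := by
    intro p x
    rw [Polynomial.aeval_eq_sum_range]
    simp [ContinuousLinearMap.sum_apply]
  have haeval_symm : ∀ (p : Polynomial ℝ) (u v : X),
      ⟪(Polynomial.aeval a p) u, v⟫ = ⟪u, (Polynomial.aeval a p) v⟫ := by
    intro p u v
    rw [haeval_apply, haeval_apply, sum_inner, inner_sum]
    refine Finset.sum_congr rfl fun i _ => ?_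
    rw [real_inner_smul_left, real_inner_smul_right, hpow_symm]
  have haeval_pos : ∀ (p : Polynomial ℝ), (∀ i, 0 ≤ p.coeff i) →
      ∀ x, 0 ≤ ⟪(Polynomial.aeval a p) x, x⟫ := by
    intro p hp x
    rw [haeval_apply, sum_inner]
    refine Finset.sum_nonneg fun i _ => ?_
    rw [real_inner_smul_left]
    exact mul_nonneg (hp i) (hpow_pos i x)
  have haeval_norm : ∀ (p : Polynomial ℝ), (∀ i, 0 ≤ p.coeff i) →
      ‖(Polynomial.aeval a p : X →L[ℝ] X)‖ ≤ p.eval 1 := by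
    intro p hp
    rw [Polynomial.aeval_eq_sum_range, Polynomial.eval_eq_sum_range]
    refine (norm_sum_le _ _).trans ?_
    refine Finset.sum_le_sum fun i _ => ?_
    rw [norm_smul, Real.norm_eq_abs, abs_of_nonneg (hp i), one_pow, mul_one]
    calc p.coeff i * ‖(a ^ i : X →L[ℝ] X)‖ ≤ p.coeff i * 1 :=
      mul_le_mul_of_nonneg_left (hpow_norm i) (hp i)
    _ = p.coeff i := mul_one _
  -- the approximating sequence
  set s : ℕ → (X →L[ℝ] X) := fun n => Polynomial.aeval a (SqrtAux.P n) with hs_def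
  have hs_symm : ∀ n (u v : X), ⟪s n u, v⟫ = ⟪u, s n v⟫ := fun n => haeval_symm _
  have hs_pos : ∀ n (x : X), 0 ≤ ⟪s n x, x⟫ := fun n => haeval_pos _ (SqrtAux.P_coeff_nonneg n)
  have hs_norm : ∀ n, ‖s n‖ ≤ 1 := fun n =>
    (haeval_norm _ (SqrtAux.P_coeff_nonneg n)).trans (SqrtAux.P_eval_one_le n)
  have hs_rec : ∀ n (x : X), s (n + 1) x = (2⁻¹ : ℝ) • (a x + s n (s n x)) := by
    intro n x
    show (Polynomial.aeval a (SqrtAux.P (n + 1))) x = _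
    rw [SqrtAux.P, map_mul, map_add, Polynomial.aeval_X, map_pow, Polynomial.aeval_C,
      Algebra.algebraMap_eq_smul_one]
    simp [ContinuousLinearMap.mul_apply, pow_two, hs_def]
  have hdiff : ∀ {n m : ℕ}, n ≤ m → ∀ i, 0 ≤ (SqrtAux.P m - SqrtAux.P n).coeff i := by
    intro n m hnm i
    rw [Polynomial.coeff_sub, sub_nonneg]
    exact SqrtAux.P_coeff_mono i hnm
  have hs_sub_apply : ∀ (n m : ℕ) (x : X),
      (Polynomial.aeval a (SqrtAux.P m - SqrtAux.P n)) x = s m x - s n x := by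
    intro n m x
    rw [map_sub]
    simp [hs_def]
  have hs_mono : ∀ x : X, Monotone fun n => ⟪s n x, x⟫ := by
    intro x n m hnm
    have h0 := haeval_pos _ (hdiff hnm) x
    rw [hs_sub_apply, inner_sub_left] at h0
    simpa using sub_nonneg.mp h0
  have hs_bdd : ∀ n (x : X), ⟪s n x, x⟫ ≤ ‖x‖ ^ 2 := by
    intro n x
    have h1 := real_inner_le_norm (s n x) x
    have h2 := (s n).le_opNorm x
    nlinarith [hs_norm n, norm_nonneg x, norm_nonneg (s n x)]
  have hkey : ∀ (x : X) {n m : ℕ}, n ≤ m →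
      ‖s m x - s n x‖ ^ 2 ≤ ⟪s m x, x⟫ - ⟪s n x, x⟫ := by
    intro x n m hnm
    set D : X →L[ℝ] X := Polynomial.aeval a (SqrtAux.P m - SqrtAux.P n) with hD
    have hDsymm := haeval_symm (SqrtAux.P m - SqrtAux.P n)
    have hDpos := haeval_pos _ (hdiff hnm)
    have hDnorm : ‖D‖ ≤ 1 := by
      refine (haeval_norm _ (hdiff hnm)).trans ?_
      rw [Polynomial.eval_sub]
      linarith [SqrtAux.P_eval_one_le m, SqrtAux.P_eval_one_nonneg n]
    have hcs := cs_aux D (map_add D) (fun t u => map_smul D t u) hDsymm hDpos x (D x)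
    have h1 : ⟪D (D x), D x⟫ ≤ ‖D x‖ ^ 2 := by
      have h2 := real_inner_le_norm (D (D x)) (D x)
      have h3 := D.le_opNorm (D x)
      nlinarith [norm_nonneg (D x), norm_nonneg (D (D x))]
    rw [real_inner_self_eq_norm_sq] at hcs
    have h4 : ‖D x‖ ^ 2 ≤ ⟪D x, x⟫ := by
      rcases eq_or_lt_of_le (sq_nonneg ‖D x‖) with h5 | h5
      · rw [← h5]; exact hDpos x
      · nlinarith [hDpos x]
    have h6 : D x = s m x - s n x := hs_sub_apply n m x
    rw [h6] at h4
    rw [inner_sub_left] at h4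
    exact h4
  -- convergence
  have hconv : ∀ x : X, ∃ l : X, Tendsto (fun n => s n x) atTop (nhds l) := by
    intro x
    refine cauchySeq_tendsto_of_complete ?_
    have hbdd : BddAbove (Set.range fun n => ⟪s n x, x⟫) := by
      refine ⟨‖x‖ ^ 2, ?_⟩
      rintro y ⟨n, rfl⟩
      exact hs_bdd n x
    have hl := tendsto_atTop_ciSup (hs_mono x) hbdd
    set L : ℝ := ⨆ n, ⟪s n x, x⟫ with hL
    have hb : ∀ N, ∀ n, N ≤ n → ⟪s n x, x⟫ ≤ L := fun N n _ => le_ciSup hbdd n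
    refine cauchySeq_of_le_tendsto_0 (fun N => Real.sqrt (L - ⟪s N x, x⟫)) ?_ ?_
    · intro n m N hn hm
      rcases le_total n m with hnm | hnm
      all_goals {
        first
        | (have h1 := hkey x hnm
           have h2 : ⟪s m x, x⟫ ≤ L := le_ciSup hbdd m
           have h3 : ⟪s N x, x⟫ ≤ ⟪s n x, x⟫ := hs_mono x hn
           rw [dist_eq_norm]
           have h4 : ‖s n x - s m x‖ ^ 2 ≤ L - ⟪s N x, x⟫ := by
             rw [norm_sub_rev]; linarith
           calc ‖s n x - s m x‖ = Real.sqrt (‖s n x - s m x‖ ^ 2) := by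
                 rw [Real.sqrt_sq (norm_nonneg _)]
           _ ≤ Real.sqrt (L - ⟪s N x, x⟫) := Real.sqrt_le_sqrt h4)
        | (have h1 := hkey x hnm
           have h2 : ⟪s n x, x⟫ ≤ L := le_ciSup hbdd n
           have h3 : ⟪s N x, x⟫ ≤ ⟪s m x, x⟫ := hs_mono x hm
           rw [dist_eq_norm]
           have h4 : ‖s n x - s m x‖ ^ 2 ≤ L - ⟪s N x, x⟫ := by linarith
           calc ‖s n x - s m x‖ = Real.sqrt (‖s n x - s m x‖ ^ 2) := by
                 rw [Real.sqrt_sq (norm_nonneg _)]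
           _ ≤ Real.sqrt (L - ⟪s N x, x⟫) := Real.sqrt_le_sqrt h4)
      }
    · have h0 : Tendsto (fun N => L - ⟪s N x, x⟫) atTop (nhds 0) := by
        have hconst : Tendsto (fun _ : ℕ => L) atTop (nhds L) := tendsto_const_nhds
        have := hconst.sub hl
        simpa using this
      have h1 := (Real.continuous_sqrt.tendsto 0).comp h0
      simpa [Function.comp_def] using h1
  choose f hf using hconv
  have hf_sub : ∀ x y, f (x - y) = f x - f y := by
    intro x y
    have h1 : Tendsto (fun n => s n (x - y)) atTop (nhds (f x - f y)) := by
      have := (hf x).sub (hf y)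
      simpa [map_sub] using this
    exact tendsto_nhds_unique (hf (x - y)) h1
  have hf_symm : ∀ u v, ⟪f u, v⟫ = ⟪u, f v⟫ := by
    intro u v
    have h1 : Tendsto (fun n => ⟪s n u, v⟫) atTop (nhds ⟪f u, v⟫) :=
      (hf u).inner tendsto_const_nhds
    have h2 : Tendsto (fun n => ⟪s n u, v⟫) atTop (nhds ⟪u, f v⟫) := by
      have h3 : Tendsto (fun n => ⟪u, s n v⟫) atTop (nhds ⟪u, f v⟫) :=
        tendsto_const_nhds.inner (hf v)
      simpa [hs_symm] using h3
    exact tendsto_nhds_unique h1 h2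
  have hf_pos : ∀ x, 0 ≤ ⟪f x, x⟫ := by
    intro x
    exact ge_of_tendsto' ((hf x).inner tendsto_const_nhds) (fun n => hs_pos n x)
  have hf_le : ∀ x, ⟪f x, x⟫ ≤ ‖x‖ ^ 2 := by
    intro x
    exact le_of_tendsto' ((hf x).inner tendsto_const_nhds) (fun n => hs_bdd n x)
  -- f ∘ f via the recurrence
  have hsff : ∀ x, Tendsto (fun n => s n (s n x)) atTop (nhds (f (f x))) := by
    intro x
    rw [tendsto_iff_norm_sub_tendsto_zero]
    have hb : Tendsto (fun n => ‖s n x - f x‖ + ‖s n (f x) - f (f x)‖) atTop (nhds 0) := by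
      have h1 := tendsto_iff_norm_sub_tendsto_zero.mp (hf x)
      have h2 := tendsto_iff_norm_sub_tendsto_zero.mp (hf (f x))
      simpa using h1.add h2
    refine squeeze_zero (fun n => norm_nonneg _) (fun n => ?_) hb
    calc ‖s n (s n x) - f (f x)‖
        ≤ ‖s n (s n x) - s n (f x)‖ + ‖s n (f x) - f (f x)‖ := by
          have := norm_sub_le (s n (s n x) - s n (f x)) (f (f x) - s n (f x))
          simpa [sub_sub_sub_cancel_right, norm_sub_rev] using
            norm_sub_le_norm_sub_add_norm_sub (s n (s n x)) (s n (f x)) (f (f x))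
    _ ≤ ‖s n x - f x‖ + ‖s n (f x) - f (f x)‖ := by
          have h1 : ‖s n (s n x) - s n (f x)‖ ≤ ‖s n x - f x‖ := by
            rw [← map_sub]
            calc ‖s n (s n x - f x)‖ ≤ ‖s n‖ * ‖s n x - f x‖ := (s n).le_opNorm _
            _ ≤ ‖s n x - f x‖ := by nlinarith [hs_norm n, norm_nonneg (s n x - f x)]
          linarith
  have hffx : ∀ x, f (f x) = f x + f x - a x := by
    intro x
    have h1 : Tendsto (fun n => s (n + 1) x) atTop (nhds (f x)) :=
      (hf x).comp (tendsto_add_atTop_nat 1)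
    have h2 : Tendsto (fun n => s (n + 1) x) atTop
        (nhds ((2⁻¹ : ℝ) • (a x + f (f x)))) := by
      simp only [hs_rec]
      exact (tendsto_const_nhds.add (hsff x)).const_smul _
    have h3 := tendsto_nhds_unique h1 h2
    have h4 : f x + f x = a x + f (f x) := by
      have h5 : (2 : ℝ) • f x = (2 : ℝ) • ((2⁻¹ : ℝ) • (a x + f (f x))) := by rw [← h3]
      rw [smul_smul] at h5
      have h6 : (2 : ℝ) * 2⁻¹ = 1 := by norm_num
      rw [h6, one_smul, two_smul] at h5
      exact h5
    rw [h4]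
    abel
  -- g = 1 - f
  set g : X → X := fun z => z - f z with hg_def
  have hg_sub : ∀ u v, g (u - v) = g u - g v := by
    intro u v
    simp only [hg_def, hf_sub]
    abel
  have hg_symm : ∀ u v, ⟪g u, v⟫ = ⟪u, g v⟫ := by
    intro u v
    simp only [hg_def, inner_sub_left, inner_sub_right, hf_symm]
  have hg_pos : ∀ x, 0 ≤ ⟪g x, x⟫ := by
    intro x
    simp only [hg_def, inner_sub_left, real_inner_self_eq_norm_sq]
    linarith [hf_le x]
  have hgg : ∀ x, g (g x) = C x := by
    intro x
    show g x - f (g x) = C x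
    have h1 : f (g x) = f x - f (f x) := by
      simp only [hg_def, hf_sub]
    rw [h1, hffx x]
    simp only [hg_def]
    rw [ha_apply]
    abel
  -- commutation of f, g with operators commuting with a
  have hWpow : ∀ (W : X →L[ℝ] X), (∀ x, W (a x) = a (W x)) →
      ∀ i (x : X), W ((a ^ i) x) = (a ^ i) (W x) := by
    intro W hW i
    induction i with
    | zero => simp
    | succ n ih =>
      intro x
      rw [pow_succ, ContinuousLinearMap.mul_apply, ContinuousLinearMap.mul_apply, ih, hW]
  have hWs : ∀ (W : X →L[ℝ] X), (∀ x, W (a x) = a (W x)) →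
      ∀ n (x : X), W (s n x) = s n (W x) := by
    intro W hW n x
    simp only [hs_def]
    rw [haeval_apply, haeval_apply, map_sum]
    refine Finset.sum_congr rfl fun i _ => ?_
    rw [map_smul, hWpow W hW i x]
  have hWf : ∀ (W : X →L[ℝ] X), (∀ x, W (a x) = a (W x)) →
      ∀ x, W (f x) = f (W x) := by
    intro W hW x
    have h1 : Tendsto (fun n => W (s n x)) atTop (nhds (W (f x))) :=
      (W.continuous.tendsto _).comp (hf x)
    have h2 : Tendsto (fun n => W (s n x)) atTop (nhds (f (W x))) := by
      simpa [hWs W hW] using hf (W x)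
    exact tendsto_nhds_unique h1 h2
  have hSa : ∀ x, S (a x) = a (S x) := by
    intro x
    rw [ha_apply, ha_apply, map_sub]
    congr 1
    rw [← hSS x]
    exact hSS (S x)
  have hKa : ∀ x, K (a x) = a (K x) := by
    intro x
    rw [ha_apply, ha_apply, map_sub]
    congr 1
    exact hKC x
  have hSf := hWf S hSa
  have hKf := hWf K hKa
  have hSg : ∀ x, S (g x) = g (S x) := by
    intro x
    simp only [hg_def, map_sub, hSf]
  have hKg : ∀ x, K (g x) = g (K x) := by
    intro x
    simp only [hg_def, map_sub, hKf]
  -- uniqueness: S = g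
  have hf_smul : ∀ (t : ℝ) x, f (t • x) = t • f x := by
    intro t x
    have h1 : Tendsto (fun n => s n (t • x)) atTop (nhds (t • f x)) := by
      have := (hf x).const_smul t
      simpa [map_smul] using this
    exact tendsto_nhds_unique (hf (t • x)) h1
  have hf_add : ∀ x y, f (x + y) = f x + f y := by
    intro x y
    have h1 : Tendsto (fun n => s n (x + y)) atTop (nhds (f x + f y)) := by
      have := (hf x).add (hf y)
      simpa [map_add] using this
    exact tendsto_nhds_unique (hf (x + y)) h1
  have hg_add : ∀ u v, g (u + v) = g u + g v := by
    intro u v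
    simp only [hg_def, hf_add]
    abel
  have hg_smul : ∀ (t : ℝ) u, g (t • u) = t • g u := by
    intro t u
    simp only [hg_def, hf_smul, smul_sub]
  have hSeqg : ∀ x, S x = g x := by
    intro x
    set y : X := S x - g x with hy
    have e1 : S y = C x - S (g x) := by
      rw [hy, map_sub, hSS]
    have e2 : g y = S (g x) - C x := by
      rw [hy, hg_sub, hSg, ← hgg x]
    have hsum : S y + g y = 0 := by
      rw [e1, e2]; abel
    have hy1 : ⟪S y, y⟫ + ⟪g y, y⟫ = 0 := by
      rw [← inner_add_left, hsum, inner_zero_left]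
    have hSy0 : ⟪S y, y⟫ = 0 := le_antisymm (by linarith [hg_pos y]) (hSpos y)
    have hgy0 : ⟪g y, y⟫ = 0 := by linarith
    have hSy : S y = 0 :=
      inner_zero_imp (fun z => S z) (map_add S) (fun t u => map_smul S t u) hSsymm hSpos y hSy0
    have hgy : g y = 0 := inner_zero_imp g hg_add hg_smul hg_symm hg_pos y hgy0
    have hyy : ⟪y, y⟫ = 0 := by
      have h1 : ⟪y, y⟫ = ⟪S x, y⟫ - ⟪g x, y⟫ := by
        rw [hy, inner_sub_left]
      rw [h1, hSsymm, hg_symm, hSy, hgy]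
      simp
    have hy0 : y = 0 := inner_self_eq_zero.mp hyy
    have := sub_eq_zero.mp (hy ▸ hy0)
    exact this
  intro x
  calc S (K x) = g (K x) := hSeqg (K x)
  _ = K (g x) := (hKg x).symm
  _ = K (S x) := by rw [hSeqg x]

end SqrtMain
section Wrapper

variable {X : Type*} [NormedAddCommGroup X] [InnerProductSpace ℝ X] [CompleteSpace X]

private theorem sqrt_comm (C₀ S K : X →L[ℝ] X)
    (hSsymm : ∀ u v, ⟪S u, v⟫ = ⟪u, S v⟫)
    (hSpos : ∀ x, 0 ≤ ⟪S x, x⟫)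
    (hSS : ∀ x, S (S x) = C₀ x)
    (hKC : ∀ x, K (C₀ x) = C₀ (K x)) :
    ∀ x, S (K x) = K (S x) := by
  by_cases hc : C₀ = 0
  · have hS0 : ∀ x, S x = 0 := by
      intro x
      have h1 : ⟪S x, S x⟫ = 0 := by
        rw [hSsymm x (S x), hSS, hc]
        simp
      exact inner_self_eq_zero.mp h1
    intro x
    rw [hS0, hS0, map_zero]
  · have hc0 : (0 : ℝ) < ‖C₀‖ := norm_pos_iff.mpr hc
    set c : ℝ := ‖C₀‖ with hcdef
    have hsq : (0 : ℝ) < Real.sqrt c := Real.sqrt_pos.mpr hc0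
    have key := sqrt_comm_main (c⁻¹ • C₀) ((Real.sqrt c)⁻¹ • S) K
      (by
        intro u v
        simp only [ContinuousLinearMap.smul_apply]
        rw [real_inner_smul_left, real_inner_smul_right, hSsymm])
      (by
        intro x
        simp only [ContinuousLinearMap.smul_apply]
        rw [real_inner_smul_left]
        exact mul_nonneg (by positivity) (hSpos x))
      (by
        intro x
        simp only [ContinuousLinearMap.smul_apply]
        rw [map_smul, smul_smul, hSS]
        have hcc : (Real.sqrt c)⁻¹ * (Real.sqrt c)⁻¹ = c⁻¹ := by
          rw [← mul_inv, Real.mul_self_sqrt (le_of_lt hc0)]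
        rw [hcc])
      (by
        intro x
        simp only [ContinuousLinearMap.smul_apply]
        rw [real_inner_smul_left]
        have h1 : ⟪C₀ x, x⟫ ≤ c * ‖x‖ ^ 2 := by
          have h2 := real_inner_le_norm (C₀ x) x
          have h3 := C₀.le_opNorm x
          nlinarith [norm_nonneg x, norm_nonneg (C₀ x)]
        calc c⁻¹ * ⟪C₀ x, x⟫ ≤ c⁻¹ * (c * ‖x‖ ^ 2) := by
              exact mul_le_mul_of_nonneg_left h1 (by positivity)
        _ = ‖x‖ ^ 2 := by field_simp)
      (by
        intro x
        simp only [ContinuousLinearMap.smul_apply]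
        rw [map_smul, hKC])
    intro x
    have h := key x
    simp only [ContinuousLinearMap.smul_apply] at h
    rw [map_smul] at h
    exact smul_right_injective X (inv_ne_zero (ne_of_gt hsq)) h

end Wrapper

open scoped RealInnerProductSpace

/-- If `T` is injective, `C₀` commutes with `T*T`, and `φ ≠ 0` is not an eigenvector of
`C₀^{1/2} T* T C₀^{1/2}`, then the linear functional `u ↦ ⟨u, T*Φ_MAP⟩` is unbounded above
on the half-space `{u : ⟨φ, u⟩ ≤ 0}`, where
`Φ_MAP = T C₀^{1/2} (C₀^{1/2}T*TC₀^{1/2} + σ²Id)⁻¹ C₀^{1/2} φ`.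
Here `S` denotes the positive square root `C₀^{1/2}` of `C₀` and `B` denotes the inverse
`(C₀^{1/2}T*TC₀^{1/2} + σ²Id)⁻¹`. -/
theorem unbounded_on_halfspace_of_not_eigenvector
    {X Y : Type*}
    [NormedAddCommGroup X] [InnerProductSpace ℝ X] [CompleteSpace X]
    [TopologicalSpace.SeparableSpace X]
    [NormedAddCommGroup Y] [InnerProductSpace ℝ Y] [CompleteSpace Y]
    [TopologicalSpace.SeparableSpace Y]
    (T : X →L[ℝ] Y) (hT : Function.Injective T) (σ : ℝ) (hσ : 0 < σ)
    (C₀ : X →L[ℝ] X) (hC₀sa : IsSelfAdjoint C₀) (hC₀pos : ∀ x : X, 0 ≤ ⟪C₀ x, x⟫)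
    (hcomm : C₀ ∘L ((ContinuousLinearMap.adjoint T) ∘L T)
      = ((ContinuousLinearMap.adjoint T) ∘L T) ∘L C₀)
    -- `S` is the positive square root `C₀^{1/2}` of `C₀`
    (S : X →L[ℝ] X) (hSsa : IsSelfAdjoint S) (hSpos : ∀ x : X, 0 ≤ ⟪S x, x⟫)
    (hS : S ∘L S = C₀)
    -- `B` is the inverse of `C₀^{1/2} T* T C₀^{1/2} + σ² Id`
    (B : X →L[ℝ] X)
    (hB : B ∘L (S ∘L (ContinuousLinearMap.adjoint T) ∘L T ∘L S + σ ^ 2 • 1) = 1)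
    (hB' : (S ∘L (ContinuousLinearMap.adjoint T) ∘L T ∘L S + σ ^ 2 • 1) ∘L B = 1)
    (φ : X) (hφ : φ ≠ 0)
    -- `φ` is not an eigenvector of `C₀^{1/2} T* T C₀^{1/2}`
    (heig : ¬ ∃ γ : ℝ, (S ∘L (ContinuousLinearMap.adjoint T) ∘L T ∘L S) φ = γ • φ) :
    ∀ M : ℝ, ∃ u : X, ⟪φ, u⟫ ≤ 0
      ∧ M < ⟪u, (ContinuousLinearMap.adjoint T) (T (S (B (S φ))))⟫ := by
  intro M
  set K : X →L[ℝ] X := (ContinuousLinearMap.adjoint T) ∘L T with hK_def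
  have hSsymm : ∀ u v : X, ⟪S u, v⟫ = ⟪u, S v⟫ := by
    intro u v
    conv_lhs => rw [← hSsa.adjoint_eq]
    exact ContinuousLinearMap.adjoint_inner_left S v u
  have hSSpt : ∀ x : X, S (S x) = C₀ x := fun x => by rw [← hS]; rfl
  have hKCpt : ∀ x : X, K (C₀ x) = C₀ (K x) := by
    intro x
    have h := congrArg (fun (A : X →L[ℝ] X) => A x) hcomm
    simpa using h.symm
  have hScomm := sqrt_comm C₀ S K hSsymm hSpos hSSpt hKCpt
  set w : X := K (S (B (S φ))) with hw_def
  have htgt : (ContinuousLinearMap.adjoint T) (T (S (B (S φ)))) = w := rfl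
  have hnot : ∀ l : ℝ, w ≠ l • φ := by
    intro l hl
    set ψ : X := B (S φ) with hψ_def
    have hBeq : S (K (S ψ)) + (σ ^ 2) • ψ = S φ := by
      have h := congrArg (fun (A : X →L[ℝ] X) => A (S φ)) hB'
      simp [ContinuousLinearMap.add_apply, ContinuousLinearMap.smul_apply,
        ContinuousLinearMap.one_apply] at h
      exact h
    have hKSψ : K (S ψ) = w := rfl
    rw [hKSψ, hl, map_smul] at hBeq
    have hψval : (σ ^ 2) • ψ = (1 - l) • S φ := by
      rw [sub_smul, one_smul, eq_sub_iff_add_eq, add_comm]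
      exact hBeq
    have hw2 : (σ ^ 2) • w = (1 - l) • (S (K (S φ))) := by
      calc (σ ^ 2) • w = K (S ((σ ^ 2) • ψ)) := by rw [map_smul, map_smul, hKSψ]
      _ = K (S ((1 - l) • S φ)) := by rw [hψval]
      _ = (1 - l) • K (S (S φ)) := by rw [map_smul, map_smul]
      _ = (1 - l) • K (C₀ φ) := by rw [hSSpt]
      _ = (1 - l) • K (S (S φ)) := by rw [hSSpt]
      _ = (1 - l) • (S (K (S φ))) := by rw [hScomm (S φ)]
    rw [hl, smul_smul] at hw2
    by_cases hl1 : l = 1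
    · rw [hl1] at hw2
      simp at hw2
      rcases hw2 with h | h
      · exact (ne_of_gt hσ).symm (by nlinarith)
      · exact hφ h
    · apply heig
      have h1l : (1 : ℝ) - l ≠ 0 := sub_ne_zero.mpr (fun h => hl1 h.symm)
      refine ⟨(1 - l)⁻¹ * (σ ^ 2 * l), ?_⟩
      have hAφ : (S ∘L (ContinuousLinearMap.adjoint T) ∘L T ∘L S) φ = S (K (S φ)) := rfl
      rw [hAφ]
      rw [← smul_smul]
      rw [eq_inv_smul_iff₀ h1l]
      exact hw2.symm
  -- construction of the unbounded direction
  have hφn : (0 : ℝ) < ‖φ‖ ^ 2 := by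
    have := norm_pos_iff.mpr hφ
    positivity
  set v : X := w - (⟪φ, w⟫ / ‖φ‖ ^ 2) • φ with hv_def
  have hvne : v ≠ 0 := by
    intro h0
    exact hnot (⟪φ, w⟫ / ‖φ‖ ^ 2) (sub_eq_zero.mp h0)
  have hφv : ⟪φ, v⟫ = 0 := by
    rw [hv_def, inner_sub_right, real_inner_smul_right, real_inner_self_eq_norm_sq]
    field_simp
    ring
  have hvw : ⟪v, w⟫ = ‖v‖ ^ 2 := by
    have hwv : w = v + (⟪φ, w⟫ / ‖φ‖ ^ 2) • φ := by rw [hv_def]; abel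
    calc ⟪v, w⟫ = ⟪v, v + (⟪φ, w⟫ / ‖φ‖ ^ 2) • φ⟫ := by rw [← hwv]
    _ = ⟪v, v⟫ + (⟪φ, w⟫ / ‖φ‖ ^ 2) * ⟪v, φ⟫ := by
        rw [inner_add_right, real_inner_smul_right]
    _ = ‖v‖ ^ 2 := by
        have hφv' : ⟪v, φ⟫ = 0 := by rw [real_inner_comm]; exact hφv
        rw [hφv', real_inner_self_eq_norm_sq, mul_zero, add_zero]
  have hvn : (0 : ℝ) < ‖v‖ ^ 2 := by
    have := norm_pos_iff.mpr hvne
    positivity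
  refine ⟨((|M| + 1) / ‖v‖ ^ 2) • v, ?_, ?_⟩
  · rw [real_inner_smul_right, hφv, mul_zero]
  · rw [htgt, real_inner_smul_left, hvw, div_mul_cancel₀ _ (ne_of_gt hvn)]
    have := le_abs_self M
    linarith
end

section
/- If C₀ commutes with T*T, then T*Φ_MAP − φ = −σ²(C₀^{1/2}T*TC₀^{1/2} + σ²Id)⁻¹φ; equivalently, T*Φ_MAP = [Id − (Id + σ⁻²C₀^{1/2}T*TC₀^{1/2})⁻¹]φ. -/
set_option synthInstance.maxHeartbeats 1000000
set_option maxHeartbeats 1000000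

open scoped RealInnerProductSpace
open Filter Finset

section Aux

variable {X : Type*} [NormedAddCommGroup X] [InnerProductSpace ℝ X] [CompleteSpace X]

lemma aux_symm {S : X →L[ℝ] X} (h : IsSelfAdjoint S) (x y : X) : ⟪S x, y⟫ = ⟪x, S y⟫ :=
  h.isSymmetric x y

/-- Product of commuting positive operators is positive. -/
lemma aux_comm_pos (S P : X →L[ℝ] X) (hSsa : IsSelfAdjoint S)
    (hSpos : ∀ x, 0 ≤ ⟪S x, x⟫) (hPpos : ∀ x, 0 ≤ ⟪P x, x⟫)
    (hSP : P * S = S * P) : ∀ x, 0 ≤ ⟪P (S x), x⟫ := by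
  by_cases hS0 : S = 0
  · intro x; simp [hS0]
  intro x
  set c : ℝ := ‖S‖ with hc
  have hcpos : 0 < c := norm_pos_iff.mpr hS0
  set f : ℕ → (X →L[ℝ] X) := fun n => (fun T => T - T * T)^[n] (c⁻¹ • S) with hf
  have hf0 : f 0 = c⁻¹ • S := rfl
  have hfs : ∀ n, f (n + 1) = f n - f n * f n := by
    intro n
    simp only [hf, Function.iterate_succ_apply']
  -- invariant
  have I : ∀ n, IsSelfAdjoint (f n) ∧ (∀ y, 0 ≤ ⟪f n y, y⟫) ∧ (∀ y, ⟪f n y, y⟫ ≤ ⟪y, y⟫)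
      ∧ P * f n = f n * P := by
    intro n
    induction n with
    | zero =>
      refine ⟨?_, ?_, ?_, ?_⟩
      · rw [hf0, IsSelfAdjoint, star_smul, hSsa.star_eq, star_trivial]
      · intro y
        rw [hf0]
        simpa [real_inner_smul_left] using
          mul_nonneg (inv_nonneg.mpr hcpos.le) (hSpos y)
      · intro y
        rw [hf0]
        have h1 : ⟪S y, y⟫ ≤ c * (‖y‖ * ‖y‖) := by
          calc ⟪S y, y⟫ ≤ ‖S y‖ * ‖y‖ := real_inner_le_norm _ _
          _ ≤ (c * ‖y‖) * ‖y‖ := by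
            have := S.le_opNorm y
            nlinarith [norm_nonneg y]
          _ = c * (‖y‖ * ‖y‖) := by ring
        have h2 : ⟪y, y⟫ = ‖y‖ * ‖y‖ := real_inner_self_eq_norm_mul_norm y
        simp only [ContinuousLinearMap.smul_apply, real_inner_smul_left]
        rw [h2]
        have hinv : c⁻¹ * c = 1 := inv_mul_cancel₀ (ne_of_gt hcpos)
        have h3 := mul_le_mul_of_nonneg_left h1 (inv_nonneg.mpr hcpos.le)
        calc c⁻¹ * ⟪S y, y⟫ ≤ c⁻¹ * (c * (‖y‖ * ‖y‖)) := h3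
        _ = ‖y‖ * ‖y‖ := by rw [← mul_assoc, hinv, one_mul]
      · rw [hf0, mul_smul_comm, smul_mul_assoc, hSP]
    | succ n ih =>
      obtain ⟨hsa, hpos, hle, hcm⟩ := ih
      rw [hfs n]
      set T := f n
      refine ⟨?_, ?_, ?_, ?_⟩
      · rw [IsSelfAdjoint, star_sub, star_mul, hsa.star_eq]
      · intro y
        have key : ⟪(T - T * T) y, y⟫
            = ⟪T (y - T y), y - T y⟫ + (⟪T y, T y⟫ - ⟪T (T y), T y⟫) := by
          simp only [ContinuousLinearMap.sub_apply, ContinuousLinearMap.mul_apply, map_sub,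
            inner_sub_left, inner_sub_right]
          ring
        have h1 := hpos (y - T y)
        have h2 : ⟪T (T y), T y⟫ ≤ ⟪T y, T y⟫ := hle (T y)
        rw [key]; linarith
      · intro y
        have h1 := hle y
        have h2 : 0 ≤ ⟪T (T y), y⟫ := by
          rw [aux_symm hsa (T y) y]
          exact real_inner_self_nonneg
        simp only [ContinuousLinearMap.sub_apply, ContinuousLinearMap.mul_apply, inner_sub_left]
        linarith
      · have h2 : P * (T * T) = (T * T) * P := by
          rw [← mul_assoc, hcm, mul_assoc, hcm, ← mul_assoc]
        rw [mul_sub, sub_mul, hcm, h2]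
  -- telescoping
  have htel : ∀ n, f 0 - f n = ∑ k ∈ Finset.range n, f k * f k := by
    intro n
    induction n with
    | zero => simp
    | succ n ih =>
      rw [Finset.sum_range_succ, ← ih, hfs n]; abel
  -- pointwise telescopes
  have happ : ∀ n, ⟪f 0 x, x⟫ - ⟪f n x, x⟫ = ∑ k ∈ Finset.range n, ⟪(f k * f k) x, x⟫ := by
    intro n
    have := congrArg (fun (g : X →L[ℝ] X) => ⟪g x, x⟫) (htel n)
    simpa [ContinuousLinearMap.sub_apply, ContinuousLinearMap.sum_apply, inner_sub_left,
      sum_inner] using this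
  have hsq : ∀ k, ⟪(f k * f k) x, x⟫ = ‖f k x‖ ^ 2 := by
    intro k
    rw [ContinuousLinearMap.mul_apply, aux_symm (I k).1 (f k x) x, real_inner_self_eq_norm_sq]
  -- summability
  have hbound : ∀ n, ∑ k ∈ Finset.range n, ‖f k x‖ ^ 2 ≤ ⟪f 0 x, x⟫ := by
    intro n
    have h := happ n
    simp only [hsq] at h
    have := (I n).2.1 x
    linarith
  have hsummable : Summable (fun k => ‖f k x‖ ^ 2) :=
    summable_of_sum_range_le (fun k => sq_nonneg _) hbound
  have hnorm2 : Tendsto (fun n => ‖f n x‖ ^ 2) atTop (nhds 0) :=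
    hsummable.tendsto_atTop_zero
  have hnorm : Tendsto (fun n => ‖f n x‖) atTop (nhds 0) := by
    have h := hnorm2.sqrt
    simpa [Real.sqrt_sq (norm_nonneg _)] using h
  -- P applied to f n x tends to zero
  have hPto0 : Tendsto (fun n => ⟪P (f n x), x⟫) atTop (nhds 0) := by
    refine squeeze_zero_norm (a := fun n => ‖P‖ * ‖x‖ * ‖f n x‖) (fun n => ?_) ?_
    · show ‖⟪P (f n x), x⟫‖ ≤ ‖P‖ * ‖x‖ * ‖f n x‖
      calc ‖⟪P (f n x), x⟫‖ ≤ ‖P (f n x)‖ * ‖x‖ := by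
            simpa using abs_real_inner_le_norm (P (f n x)) x
      _ ≤ (‖P‖ * ‖f n x‖) * ‖x‖ := by
            have := P.le_opNorm (f n x)
            nlinarith [norm_nonneg x]
      _ = ‖P‖ * ‖x‖ * ‖f n x‖ := by ring
    · simpa using hnorm.const_mul (‖P‖ * ‖x‖)
  -- monotone bound
  have hmono : ∀ n, ⟪P (f n x), x⟫ ≤ ⟪P (f 0 x), x⟫ := by
    intro n
    have htel' := congrArg (fun (g : X →L[ℝ] X) => ⟪P (g x), x⟫) (htel n)
    simp only [ContinuousLinearMap.sub_apply, ContinuousLinearMap.sum_apply, map_sub, map_sum,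
      inner_sub_left, sum_inner] at htel'
    have hterm : ∀ k ∈ Finset.range n, 0 ≤ ⟪P ((f k * f k) x), x⟫ := by
      intro k _
      have hcm := (I k).2.2.2
      have hPf : P (f k (f k x)) = f k (P (f k x)) := by
        have := DFunLike.congr_fun hcm (f k x)
        simpa [ContinuousLinearMap.mul_apply] using this
      rw [ContinuousLinearMap.mul_apply, hPf, aux_symm (I k).1 (P (f k x)) x]
      · exact hPpos (f k x)
    have hsumnn : 0 ≤ ∑ k ∈ Finset.range n, ⟪P ((f k * f k) x), x⟫ :=
      Finset.sum_nonneg hterm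
    linarith
  have h0 : 0 ≤ ⟪P (f 0 x), x⟫ :=
    le_of_tendsto hPto0 (Filter.Eventually.of_forall hmono)
  -- conclude
  have hSx : S x = c • (f 0 x) := by
    rw [hf0]
    simp [smul_smul, mul_inv_cancel₀ (ne_of_gt hcpos)]
  rw [hSx, map_smul, real_inner_smul_left]
  exact mul_nonneg hcpos.le h0

end Aux

lemma aux_quad_zero {X : Type*} [NormedAddCommGroup X] [InnerProductSpace ℝ X] [CompleteSpace X]
    (R : X →L[ℝ] X) (hsa : IsSelfAdjoint R) (hpos : ∀ x, 0 ≤ ⟪R x, x⟫)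
    {y : X} (hy : ⟪R y, y⟫ = 0) : R y = 0 := by
  set a := ⟪R (R y), R y⟫ with ha
  have key : ∀ t : ℝ, 0 ≤ a * (t * t) + (2 * ‖R y‖ ^ 2) * t + 0 := by
    intro t
    have h0 := hpos (y + t • R y)
    have expand : ⟪R (y + t • R y), y + t • R y⟫ = a * (t * t) + (2 * ‖R y‖ ^ 2) * t + 0 := by
      have hcross : ⟪R (R y), y⟫ = ⟪R y, R y⟫ := aux_symm hsa (R y) y
      simp only [map_add, map_smul, inner_add_left, inner_add_right, real_inner_smul_left,
        real_inner_smul_right, hy, hcross, real_inner_self_eq_norm_sq]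
      ring
    rw [← expand]; exact h0
  have hd := discrim_le_zero key
  rw [discrim] at hd
  have hb : (2 * ‖R y‖ ^ 2) ^ 2 ≤ 0 := by nlinarith [hd]
  have : ‖R y‖ ^ 2 = 0 := by nlinarith [sq_nonneg (‖R y‖ ^ 2), sq_nonneg (‖R y‖)]
  simpa using this

/-- If `C₀` commutes with `T*T`, then
`T*Φ_MAP − φ = −σ²(C₀^{1/2}T*TC₀^{1/2} + σ²Id)⁻¹ φ`, where
`Φ_MAP = T C₀^{1/2} (C₀^{1/2}T*TC₀^{1/2} + σ²Id)⁻¹ C₀^{1/2} φ`.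
Here `S` denotes the positive square root `C₀^{1/2}` of `C₀` and `B` denotes the inverse
`(C₀^{1/2}T*TC₀^{1/2} + σ²Id)⁻¹`. -/
theorem adjoint_probe_residual_eq
    {X Y : Type*}
    [NormedAddCommGroup X] [InnerProductSpace ℝ X] [CompleteSpace X]
    [TopologicalSpace.SeparableSpace X]
    [NormedAddCommGroup Y] [InnerProductSpace ℝ Y] [CompleteSpace Y]
    [TopologicalSpace.SeparableSpace Y]
    (T : X →L[ℝ] Y) (σ : ℝ) (hσ : 0 < σ)
    (C₀ : X →L[ℝ] X) (hC₀sa : IsSelfAdjoint C₀) (hC₀pos : ∀ x : X, 0 ≤ ⟪C₀ x, x⟫)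
    (hcomm : C₀ ∘L ((ContinuousLinearMap.adjoint T) ∘L T)
      = ((ContinuousLinearMap.adjoint T) ∘L T) ∘L C₀)
    -- `S` is the positive square root `C₀^{1/2}` of `C₀`
    (S : X →L[ℝ] X) (hSsa : IsSelfAdjoint S) (hSpos : ∀ x : X, 0 ≤ ⟪S x, x⟫)
    (hS : S ∘L S = C₀)
    -- `B` is the inverse of `C₀^{1/2} T* T C₀^{1/2} + σ² Id`
    (B : X →L[ℝ] X)
    (hB : B ∘L (S ∘L (ContinuousLinearMap.adjoint T) ∘L T ∘L S + σ ^ 2 • 1) = 1)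
    (hB' : (S ∘L (ContinuousLinearMap.adjoint T) ∘L T ∘L S + σ ^ 2 • 1) ∘L B = 1)
    (φ : X) :
    (ContinuousLinearMap.adjoint T) (T (S (B (S φ)))) - φ = -(σ ^ 2 • B φ) := by
  set A : X →L[ℝ] X := (ContinuousLinearMap.adjoint T) ∘L T with hAdef
  have hAsa : IsSelfAdjoint A := by
    rw [IsSelfAdjoint, ContinuousLinearMap.star_eq_adjoint, hAdef,
      ContinuousLinearMap.adjoint_comp, ContinuousLinearMap.adjoint_adjoint]
  have hCA : S * S * A = A * (S * S) := by
    have h1 : S * S = C₀ := hS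
    rw [h1]; exact hcomm
  set K : X →L[ℝ] X := S * A - A * S with hKdef
  have hKstar : star K = -K := by
    rw [hKdef, star_sub, star_mul, star_mul, hAsa.star_eq, hSsa.star_eq, neg_sub]
  have hKadj : ContinuousLinearMap.adjoint K = -K := by
    rw [← ContinuousLinearMap.star_eq_adjoint, hKstar]
  have hSK_anti : S * K = -(K * S) := by
    rw [hKdef, mul_sub, sub_mul, neg_sub]
    have e1 : S * (S * A) = A * S * S := by
      rw [← mul_assoc, hCA, mul_assoc]
    have e2 : S * (A * S) = S * A * S := by rw [mul_assoc]
    rw [e1, e2]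
  have hKS_anti : K * S = -(S * K) := by rw [hSK_anti, neg_neg]
  have hKKpos : ∀ x : X, 0 ≤ ⟪(-(K * K)) x, x⟫ := by
    intro x
    have h1 : ((-(K * K)) : X →L[ℝ] X) x = -(K (K x)) := by
      simp [ContinuousLinearMap.mul_apply]
    rw [h1, inner_neg_left]
    have h2 : ⟪K (K x), x⟫ = ⟪K x, (ContinuousLinearMap.adjoint K) x⟫ :=
      (ContinuousLinearMap.adjoint_inner_right K (K x) x).symm
    rw [h2, hKadj]
    simp only [ContinuousLinearMap.neg_apply, inner_neg_right, neg_neg]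
    exact real_inner_self_nonneg
  have hKKS : (K * K) * S = S * (K * K) := by
    calc (K * K) * S = K * (K * S) := by rw [mul_assoc]
    _ = K * (-(S * K)) := by rw [hKS_anti]
    _ = -((K * S) * K) := by rw [mul_neg, mul_assoc]
    _ = -((-(S * K)) * K) := by rw [hKS_anti]
    _ = (S * K) * K := by rw [neg_mul, neg_neg]
    _ = S * (K * K) := by rw [mul_assoc]
  have hSKKcomm : (-(K * K)) * S = S * (-(K * K)) := by
    rw [neg_mul, mul_neg, hKKS]
  have hq : ∀ x : X, 0 ≤ ⟪(-(K * K)) (S x), x⟫ :=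
    aux_comm_pos S (-(K * K)) hSsa hSpos hKKpos hSKKcomm
  have hSKzero : ∀ x : X, S (K x) = 0 := by
    intro x
    apply aux_quad_zero S hSsa hSpos
    have hge : 0 ≤ ⟪S (K x), K x⟫ := hSpos (K x)
    have hle : ⟪S (K x), K x⟫ ≤ 0 := by
      have h := hq x
      have hKSx : K (S x) = -(S (K x)) := by
        have := DFunLike.congr_fun hKS_anti x
        simpa [ContinuousLinearMap.mul_apply] using this
      have h1 : ((-(K * K)) : X →L[ℝ] X) (S x) = K (S (K x)) := by
        simp only [ContinuousLinearMap.neg_apply, ContinuousLinearMap.mul_apply, hKSx,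
          map_neg, neg_neg]
      rw [h1] at h
      have h2 : ⟪K (S (K x)), x⟫ = ⟪S (K x), (ContinuousLinearMap.adjoint K) x⟫ :=
        (ContinuousLinearMap.adjoint_inner_right K (S (K x)) x).symm
      rw [h2, hKadj] at h
      simp only [ContinuousLinearMap.neg_apply, inner_neg_right] at h
      linarith
    linarith
  have hSK0 : S * K = 0 := by
    ext x
    simpa [ContinuousLinearMap.mul_apply] using hSKzero x
  have hKS0 : K * S = 0 := by rw [hKS_anti, hSK0, neg_zero]
  -- the two key algebraic identities
  have h1 : S * (S * A) = S * (A * S) := by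
    have h := hSK0
    rw [hKdef, mul_sub, sub_eq_zero] at h
    exact h
  have h2 : S * (A * S) = A * (S * S) := by
    have h := hKS0
    rw [hKdef, sub_mul, sub_eq_zero] at h
    calc S * (A * S) = S * A * S := by rw [mul_assoc]
    _ = A * S * S := h
    _ = A * (S * S) := by rw [mul_assoc]
  -- inverse hypotheses in ring form
  have hB1 : B * (S * (A * S) + σ ^ 2 • 1) = 1 := hB
  have hB'1 : (S * (A * S) + σ ^ 2 • 1) * B = 1 := hB'
  set M : X →L[ℝ] X := S * (A * S) + σ ^ 2 • 1 with hMdef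
  have hSM : S * M = M * S := by
    rw [hMdef, mul_add, add_mul, mul_smul_comm, smul_mul_assoc, mul_one, one_mul]
    congr 1
    calc S * (S * (A * S)) = S * (S * A * S) := by rw [mul_assoc]
    _ = S * (S * A) * S := by rw [← mul_assoc]
    _ = S * (A * S) * S := by rw [h1]
  have hBS : B * S = S * B := by
    calc B * S = B * S * (M * B) := by rw [hB'1, mul_one]
    _ = B * (S * M) * B := by rw [← mul_assoc, mul_assoc B S M]
    _ = B * (M * S) * B := by rw [hSM]
    _ = (B * M) * (S * B) := by rw [← mul_assoc, mul_assoc (B*M) S B]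
    _ = S * B := by rw [hB1, one_mul]
  -- apply everything to φ
  have hstep1 : B (S φ) = S (B φ) := by
    have := DFunLike.congr_fun hBS φ
    simpa [ContinuousLinearMap.mul_apply] using this
  have hstep3 : S (A (S (B φ))) + σ ^ 2 • B φ = φ := by
    have := DFunLike.congr_fun hB'1 φ
    simpa [ContinuousLinearMap.mul_apply, ContinuousLinearMap.add_apply,
      ContinuousLinearMap.smul_apply, ContinuousLinearMap.one_apply, hMdef] using this
  have hstep2 : A (S (S (B φ))) = S (A (S (B φ))) := by
    have := DFunLike.congr_fun h2 (B φ)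
    simpa [ContinuousLinearMap.mul_apply] using this.symm
  have key : A (S (B (S φ))) = φ - σ ^ 2 • B φ := by
    rw [hstep1, hstep2]
    rw [eq_sub_iff_add_eq]
    exact hstep3
  have hgoal : (ContinuousLinearMap.adjoint T) (T (S (B (S φ)))) = A (S (B (S φ))) := rfl
  rw [hgoal, key]
  abel
end

section
/- Suppose φ ≠ 0 satisfies C₀^{1/2}T*TC₀^{1/2}φ = γφ with γ > 0, and suppose Φ₀ ∈ Y lies in the closed linear span of (f_k)_{k∈ℕ} and satisfies T*Φ₀ = φ. Then: (i) TC₀T*Φ₀ = γΦ₀, i.e. Φ₀ is an eigenvector of TC₀T* with eigenvalue γ; (ii) ⟨φ, C₀φ⟩_X = γ‖Φ₀‖_Y²; and (iii) ‖Φ_MAP‖_Y = (γ/(γ + σ²))‖Φ₀‖_Y. -/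
open scoped RealInnerProductSpace

/-- Let `T` be an injective compact operator with singular system `(τ_k, e_k, f_k)`,
let `C₀ e_k = ρ_k e_k` with `ρ_k > 0`, and suppose `φ ≠ 0` satisfies
`C₀^{1/2}T*TC₀^{1/2} φ = γ φ` with `γ > 0`.  If `Φ₀` lies in the closed linear span of
`(f_k)` and `T*Φ₀ = φ`, then (i) `TC₀T*Φ₀ = γΦ₀`, (ii) `⟨φ, C₀φ⟩ = γ‖Φ₀‖²`, and
(iii) `‖Φ_MAP‖ = (γ/(γ+σ²))‖Φ₀‖`, where
`Φ_MAP = T C₀^{1/2} (C₀^{1/2}T*TC₀^{1/2} + σ²Id)⁻¹ C₀^{1/2} φ`, `S` denotes the positive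
square root `C₀^{1/2}` of `C₀`, and `B` the inverse `(C₀^{1/2}T*TC₀^{1/2} + σ²Id)⁻¹`. -/
theorem unregularized_probe_eigenvector_and_norms
    {X Y : Type*}
    [NormedAddCommGroup X] [InnerProductSpace ℝ X] [CompleteSpace X]
    [TopologicalSpace.SeparableSpace X]
    [NormedAddCommGroup Y] [InnerProductSpace ℝ Y] [CompleteSpace Y]
    [TopologicalSpace.SeparableSpace Y]
    (T : X →L[ℝ] Y) (hTinj : Function.Injective T) (hTcomp : IsCompactOperator T)
    -- singular system of `T`
    (e : HilbertBasis ℕ ℝ X) (f : ℕ → Y) (hf : Orthonormal ℝ f)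
    (τ : ℕ → ℝ) (hτpos : ∀ k, 0 < τ k)
    (hT : ∀ x : X, T x = ∑' k : ℕ, (τ k * ⟪e k, x⟫) • f k)
    -- `C₀` is jointly diagonalizable with `T*T`
    (C₀ : X →L[ℝ] X) (hC₀sa : IsSelfAdjoint C₀)
    (hC₀pos : ∀ x : X, x ≠ 0 → 0 < ⟪C₀ x, x⟫)
    (ρ : ℕ → ℝ) (hρpos : ∀ k, 0 < ρ k) (hC₀e : ∀ k, C₀ (e k) = ρ k • e k)
    (σ : ℝ) (hσ : 0 < σ)
    -- `S` is the positive square root `C₀^{1/2}` of `C₀`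
    (S : X →L[ℝ] X) (hSsa : IsSelfAdjoint S) (hSpos : ∀ x : X, 0 ≤ ⟪S x, x⟫)
    (hS : S ∘L S = C₀)
    -- `B` is the inverse of `C₀^{1/2} T* T C₀^{1/2} + σ² Id`
    (B : X →L[ℝ] X)
    (hB : B ∘L (S ∘L (ContinuousLinearMap.adjoint T) ∘L T ∘L S + σ ^ 2 • 1) = 1)
    (hB' : (S ∘L (ContinuousLinearMap.adjoint T) ∘L T ∘L S + σ ^ 2 • 1) ∘L B = 1)
    (φ : X) (hφ : φ ≠ 0) (γ : ℝ) (hγ : 0 < γ)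
    (heig : (S ∘L (ContinuousLinearMap.adjoint T) ∘L T ∘L S) φ = γ • φ)
    (Φ₀ : Y) (hΦ₀mem : Φ₀ ∈ (Submodule.span ℝ (Set.range f)).topologicalClosure)
    (hΦ₀ : (ContinuousLinearMap.adjoint T) Φ₀ = φ) :
    T (C₀ ((ContinuousLinearMap.adjoint T) Φ₀)) = γ • Φ₀
    ∧ ⟪φ, C₀ φ⟫ = γ * ‖Φ₀‖ ^ 2
    ∧ ‖T (S (B (S φ)))‖ = (γ / (γ + σ ^ 2)) * ‖Φ₀‖ := by
  classical
  set T' := ContinuousLinearMap.adjoint T with hT'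
  -- extensionality via the Hilbert basis
  have hext : ∀ u v : X, (∀ i, ⟪e i, u⟫ = ⟪e i, v⟫) → u = v := by
    intro u v h
    refine e.repr.injective ?_
    ext i
    simpa [e.repr_apply_apply] using h i
  have hee : ∀ i j, ⟪e i, e j⟫ = if i = j then (1 : ℝ) else 0 :=
    orthonormal_iff_ite.mp e.orthonormal
  have hff : ∀ i j, ⟪f i, f j⟫ = if i = j then (1 : ℝ) else 0 :=
    orthonormal_iff_ite.mp hf
  -- `T e_k = τ_k f_k`
  have hTe : ∀ k, T (e k) = τ k • f k := by
    intro k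
    rw [hT (e k)]
    rw [tsum_eq_single k]
    · simp [hee k k, e.orthonormal.1 k]
    · intro j hj
      simp [hee j k, hj]
  -- `T* f_k = τ_k e_k`
  have hT'f : ∀ k, T' (f k) = τ k • e k := by
    intro k
    refine hext _ _ fun i => ?_
    rw [hT', ContinuousLinearMap.adjoint_inner_right, hTe i, real_inner_smul_left,
      real_inner_smul_right, hff i k, hee i k]
    by_cases h : i = k <;> simp [h]
  -- `T* T e_k = τ_k ^ 2 e_k`
  have hAe : ∀ k, T' (T (e k)) = τ k ^ 2 • e k := by
    intro k
    rw [hTe k, map_smul, hT'f k, smul_smul, sq]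
  -- `S e_k = √ρ_k e_k`
  have hSe : ∀ k, S (e k) = Real.sqrt (ρ k) • e k := by
    intro k
    set r := Real.sqrt (ρ k) with hr
    have hrpos : 0 < r := Real.sqrt_pos.mpr (hρpos k)
    set w := S (e k) - r • e k with hw
    have hSS : S (S (e k)) = C₀ (e k) := by
      rw [← hS]; rfl
    have hSw : S w = -(r • w) := by
      have : S w = S (S (e k)) - r • S (e k) := by
        rw [hw, map_sub, map_smul]
      rw [this, hSS, hC₀e k, hw]
      have hρr : ρ k = r * r := (Real.mul_self_sqrt (hρpos k).le).symm
      rw [hρr]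
      module
    have hinner : (0 : ℝ) ≤ -(r * ⟪w, w⟫) := by
      have := hSpos w
      rwa [hSw, inner_neg_left, real_inner_smul_left] at this
    have hww : ⟪w, w⟫ = 0 := by
      have h1 : 0 ≤ ⟪w, w⟫ := real_inner_self_nonneg
      nlinarith
    have hw0 : w = 0 := inner_self_eq_zero.mp hww
    exact sub_eq_zero.mp hw0
  -- `S` commutes with `T* T`
  have hcomm : S ∘L (T' ∘L T) = (T' ∘L T) ∘L S := by
    have hdense : Dense (Submodule.span ℝ (Set.range (e : ℕ → X)) : Set X) :=
      Submodule.dense_iff_topologicalClosure_eq_top.mpr e.dense_span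
    refine ContinuousLinearMap.ext_on hdense ?_
    rintro _ ⟨k, rfl⟩
    show S (T' (T (e k))) = T' (T (S (e k)))
    rw [hAe k, map_smul, hSe k, map_smul, map_smul, hAe k, smul_comm]
  -- the key identity: `T* T C₀ φ = γ φ`
  have hkey : T' (T (C₀ φ)) = γ • φ := by
    have h1 : S (T' (T (S φ))) = γ • φ := by
      simpa [ContinuousLinearMap.comp_apply] using heig
    have h2 : S (T' (T (S φ))) = T' (T (S (S φ))) := by
      have := congrFun (congrArg (fun (A : X →L[ℝ] X) => (A : X → X)) hcomm) (S φ)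
      simpa [ContinuousLinearMap.comp_apply] using this
    have h3 : S (S φ) = C₀ φ := by rw [← hS]; rfl
    rw [h2, h3] at h1
    exact h1
  set K := (Submodule.span ℝ (Set.range f)).topologicalClosure with hK
  -- range of T lies in K
  have hTmem : ∀ x : X, T x ∈ K := by
    intro x
    rw [hT x]
    by_cases hsum : Summable fun k : ℕ => (τ k * ⟪e k, x⟫) • f k
    · have hmem : ∀ s : Finset ℕ, (∑ k ∈ s, (τ k * ⟪e k, x⟫) • f k) ∈ K := by
        intro s
        refine Submodule.sum_mem _ fun k _ => ?_
        exact Submodule.smul_mem _ _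
          (Submodule.le_topologicalClosure _ (Submodule.subset_span ⟨k, rfl⟩))
      exact (Submodule.isClosed_topologicalClosure _).mem_of_tendsto
        hsum.hasSum (Filter.Eventually.of_forall hmem)
    · rw [tsum_eq_zero_of_not_summable hsum]
      exact Submodule.zero_mem _
  -- `T*` is injective on `K`
  have hinjK : ∀ y, y ∈ K → T' y = 0 → y = 0 := by
    intro y hy hy0
    have hfy : ∀ k, ⟪f k, y⟫ = 0 := by
      intro k
      have : ⟪T (e k), y⟫ = 0 := by
        rw [← ContinuousLinearMap.adjoint_inner_right, ← hT', hy0, inner_zero_right]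
      rw [hTe k, real_inner_smul_left] at this
      have := mul_eq_zero.mp this
      rcases this with h | h
      · exact absurd h (hτpos k).ne'
      · exact h
    have hspan : ∀ u ∈ Submodule.span ℝ (Set.range f), ⟪u, y⟫ = 0 := by
      intro u hu
      induction hu using Submodule.span_induction with
      | mem u hu => obtain ⟨k, rfl⟩ := hu; exact hfy k
      | zero => simp
      | add u v _ _ hu hv => rw [inner_add_left, hu, hv, add_zero]
      | smul c u _ hu => rw [real_inner_smul_left, hu, mul_zero]
    have hclos : ∀ u ∈ K, ⟪u, y⟫ = 0 := by
      intro u hu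
      have hcl : IsClosed {u : Y | ⟪u, y⟫ = 0} := by
        have : Continuous fun u : Y => ⟪u, y⟫ := continuous_inner.comp
          (continuous_id.prodMk continuous_const)
        exact isClosed_eq this continuous_const
      exact hcl.closure_subset_iff.mpr hspan hu
    have := hclos y hy
    exact inner_self_eq_zero.mp this
  -- part (i)
  have hi : T (C₀ φ) = γ • Φ₀ := by
    have hmem : T (C₀ φ) - γ • Φ₀ ∈ K :=
      Submodule.sub_mem _ (hTmem _) (Submodule.smul_mem _ _ hΦ₀mem)
    have h0 : T' (T (C₀ φ) - γ • Φ₀) = 0 := by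
      rw [map_sub, map_smul, hkey, hΦ₀, sub_self]
    have := hinjK _ hmem h0
    exact sub_eq_zero.mp this
  have hgoal1 : T (C₀ (T' Φ₀)) = γ • Φ₀ := by rw [hΦ₀]; exact hi
  -- part (ii)
  have hii : ⟪φ, C₀ φ⟫ = γ * ‖Φ₀‖ ^ 2 := by
    calc ⟪φ, C₀ φ⟫ = ⟪T' Φ₀, C₀ φ⟫ := by rw [hΦ₀]
      _ = ⟪Φ₀, T (C₀ φ)⟫ := by rw [hT', ContinuousLinearMap.adjoint_inner_left]
      _ = ⟪Φ₀, γ • Φ₀⟫ := by rw [hi]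
      _ = γ * ‖Φ₀‖ ^ 2 := by rw [real_inner_smul_right, real_inner_self_eq_norm_sq]
  -- part (iii)
  have hγσ : γ + σ ^ 2 ≠ 0 := by positivity
  have hSS : S (S φ) = C₀ φ := by rw [← hS]; rfl
  have hMSφ : S (T' (T (S (S φ)))) = γ • S φ := by
    rw [hSS]
    have h2 : S (T' (T (C₀ φ))) = S (γ • φ) := by rw [hkey]
    rw [h2, map_smul]
  have hBS : B (S φ) = (γ + σ ^ 2)⁻¹ • S φ := by
    have happ := congrFun (congrArg (fun (A : X →L[ℝ] X) => (A : X → X)) hB) (S φ)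
    have hMs : (S ∘L T' ∘L T ∘L S + σ ^ 2 • 1) (S φ) = (γ + σ ^ 2) • S φ := by
      simp only [ContinuousLinearMap.add_apply, ContinuousLinearMap.comp_apply,
        ContinuousLinearMap.smul_apply, ContinuousLinearMap.one_apply]
      rw [show S (T' (T (S (S φ)))) = γ • S φ from hMSφ, add_smul]
    simp only [ContinuousLinearMap.comp_apply, ContinuousLinearMap.one_apply] at happ
    rw [hMs, map_smul] at happ
    have : (γ + σ ^ 2)⁻¹ • ((γ + σ ^ 2) • B (S φ)) = (γ + σ ^ 2)⁻¹ • S φ := by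
      rw [happ]
    rwa [smul_smul, inv_mul_cancel₀ hγσ, one_smul] at this
  have hiii : ‖T (S (B (S φ)))‖ = (γ / (γ + σ ^ 2)) * ‖Φ₀‖ := by
    have : T (S (B (S φ))) = (γ / (γ + σ ^ 2)) • Φ₀ := by
      rw [hBS, map_smul, map_smul, hSS, hi, smul_smul, div_eq_inv_mul]
    rw [this, norm_smul, Real.norm_eq_abs, abs_of_pos (by positivity)]
  exact ⟨hgoal1, hii, hiii⟩
end

section
/- Define J(Φ) := (ρ‖(T*T)^{ν/2}(T*Φ − φ)‖_X − ⟨Φ, Tu⟩_Y)/‖Φ‖_Y for Φ ∈ Y \ {0}. If Φ† ∈ Y \ {0} satisfies J(Φ†) ≤ J(Φ) for all Φ ∈ Y \ {0} and J(Φ†) < 0, then Φ† belongs to the closure of the range of T. -/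
open scoped RealInnerProductSpace

/-- Define `J(Φ) = (ρ‖(T*T)^{ν/2}(T*Φ − φ)‖ − ⟨Φ, Tu⟩)/‖Φ‖` for `Φ ≠ 0`.  If `Φ†ₜ ≠ 0`
minimizes `J` over `Y \ {0}` and `J(Φ†) < 0`, then `Φ†` lies in the closure of the range
of `T`.  The operator power `(T*T)^s` of the positive self-adjoint operator `T*T` is
encoded by the family `pow`, uniquely determined by the hypotheses: `pow 0 = Id`,
`pow 1 = T*T`, each `pow s` (`s > 0`) is self-adjoint and positive, `pow` is additive in
the exponent, and `pow` is norm-continuous on `(0,∞)`. -/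
theorem minimizer_of_J_mem_closure_range
    {X Y : Type*}
    [NormedAddCommGroup X] [InnerProductSpace ℝ X] [CompleteSpace X]
    [TopologicalSpace.SeparableSpace X]
    [NormedAddCommGroup Y] [InnerProductSpace ℝ Y] [CompleteSpace Y]
    [TopologicalSpace.SeparableSpace Y]
    (T : X →L[ℝ] Y) (φ u : X) (ρ ν : ℝ) (hρ : 0 < ρ) (hν : 0 ≤ ν)
    -- `pow s` is the operator power `(T*T)^s`, characterized by:
    (pow : ℝ → (X →L[ℝ] X))
    (hpow0 : pow 0 = 1)
    (hpow1 : pow 1 = (ContinuousLinearMap.adjoint T) ∘L T)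
    (hpowsa : ∀ s : ℝ, 0 < s → IsSelfAdjoint (pow s))
    (hpowpos : ∀ s : ℝ, 0 < s → ∀ x : X, 0 ≤ ⟪(pow s) x, x⟫)
    (hpowadd : ∀ s t : ℝ, 0 < s → 0 < t → pow (s + t) = pow s ∘L pow t)
    (hpowcont : ContinuousOn pow (Set.Ioi (0 : ℝ)))
    -- the objective functional `J`
    (J : Y → ℝ)
    (hJ : ∀ Φ : Y, J Φ =
      (ρ * ‖(pow (ν / 2)) ((ContinuousLinearMap.adjoint T) Φ - φ)‖ - ⟪Φ, T u⟫) / ‖Φ‖)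
    (Φdag : Y) (hΦdag : Φdag ≠ 0)
    (hmin : ∀ Φ : Y, Φ ≠ 0 → J Φdag ≤ J Φ)
    (hneg : J Φdag < 0) :
    Φdag ∈ closure (Set.range T) := by

  classical
  set K : Submodule ℝ Y := (LinearMap.range (T : X →ₗ[ℝ] Y)).topologicalClosure with hKdef
  haveI : CompleteSpace K := (Submodule.isClosed_topologicalClosure _).completeSpace_coe
  set p : Y := (K.orthogonalProjectionOnto Φdag : Y) with hpdef
  set q : Y := Φdag - p with hqdef
  have hpK : p ∈ K := (K.orthogonalProjectionOnto Φdag).2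
  have hqK : q ∈ Kᗮ := Submodule.sub_starProjection_mem_orthogonal Φdag
  have hrange : ∀ x : X, T x ∈ K := fun x =>
    Submodule.le_topologicalClosure _ (LinearMap.mem_range_self _ x)
  have hinner_q : ∀ x : X, ⟪q, T x⟫ = 0 := fun x => by
    rw [real_inner_comm]
    exact (Submodule.mem_orthogonal K q).mp hqK (T x) (hrange x)
  have hTq : (ContinuousLinearMap.adjoint T) q = 0 := by
    have h : ⟪(ContinuousLinearMap.adjoint T) q, (ContinuousLinearMap.adjoint T) q⟫ = 0 := by
      rw [ContinuousLinearMap.adjoint_inner_left]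
      exact hinner_q _
    exact inner_self_eq_zero.mp h
  have hsum : Φdag = p + q := by rw [hqdef]; abel
  have hTΦ : (ContinuousLinearMap.adjoint T) Φdag = (ContinuousLinearMap.adjoint T) p := by
    rw [hsum, map_add, hTq, add_zero]
  have hinnerΦ : ⟪Φdag, T u⟫ = ⟪p, T u⟫ := by
    rw [hsum, inner_add_left, hinner_q u, add_zero]
  set N : ℝ := ρ * ‖(pow (ν / 2)) ((ContinuousLinearMap.adjoint T) Φdag - φ)‖ - ⟪Φdag, T u⟫ with hNdef
  have hΦnorm : 0 < ‖Φdag‖ := norm_pos_iff.mpr hΦdag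
  have hNneg : N < 0 := by
    have := hneg
    rw [hJ Φdag] at this
    by_contra hN
    push_neg at hN
    exact absurd (div_nonneg hN hΦnorm.le) (not_le.mpr this)
  have hp0 : p ≠ 0 := by
    intro h0
    have h1 : ⟪Φdag, T u⟫ = 0 := by rw [hinnerΦ, h0, inner_zero_left]
    have h2 : N = ρ * ‖(pow (ν / 2)) ((ContinuousLinearMap.adjoint T) Φdag - φ)‖ := by
      rw [hNdef, h1, sub_zero]
    have : 0 ≤ N := by rw [h2]; positivity
    linarith
  have hJp : J p = N / ‖p‖ := by
    rw [hJ p, hNdef, hTΦ, hinnerΦ]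
  have hq0 : q = 0 := by
    by_contra hq0
    have hqnorm : 0 < ‖q‖ := norm_pos_iff.mpr hq0
    have hpq : ⟪p, q⟫ = 0 := (Submodule.mem_orthogonal K q).mp hqK p hpK
    have hnormsq : ‖Φdag‖ ^ 2 = ‖p‖ ^ 2 + ‖q‖ ^ 2 := by
      rw [hsum, norm_add_sq_real, hpq]; ring
    have hpnorm : 0 < ‖p‖ := norm_pos_iff.mpr hp0
    have hlt : ‖p‖ < ‖Φdag‖ := by nlinarith
    have hJlt : J p < J Φdag := by
      rw [hJp, hJ Φdag, ← hNdef, div_lt_div_iff₀ hpnorm hΦnorm]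
      nlinarith
    exact absurd (hmin p hp0) (not_le.mpr hJlt)
  have hΦp : Φdag = p := by rw [hsum, hq0, add_zero]
  rw [hΦp]
  have hKset : (K : Set Y) = closure (Set.range T) := by
    rw [hKdef, Submodule.topologicalClosure_coe, LinearMap.coe_range]; rfl
  exact hKset ▸ hpK
end

section
/- Fix σ > 0 and φ ∈ X, and let Φ† ∈ Y lie in the closed linear span of (f_k)_{k∈ℕ}. Assume that for every k ∈ ℕ: (a) ⟨T*Φ†, e_k⟩ = 0 implies ⟨φ, e_k⟩ = 0, and (b) if both ⟨T*Φ†, e_k⟩ ≠ 0 and ⟨φ − T*Φ†, e_k⟩ ≠ 0 then ⟨T*Φ†, e_k⟩/⟨φ − T*Φ†, e_k⟩ > 0. Then there exists a sequence (C_n)_{n∈ℕ} of self-adjoint, positive definite, trace-class operators on X, each commuting with T*T, such that ‖Φ_MAP(C_n) − Φ†‖_Y → 0 as n → ∞, where Φ_MAP(C) := TC^{1/2}(C^{1/2}T*TC^{1/2} + σ²Id)⁻¹C^{1/2}φ. -/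
open scoped RealInnerProductSpace ENNReal NNReal

lemma rp2 (t : ℝ) : t ^ (2:ℝ≥0∞).toReal = t ^ 2 := by
  rw [show ((2:ℝ≥0∞).toReal) = ((2:ℕ):ℝ) by norm_num, Real.rpow_natCast]

lemma memℓp_bounded_mul {α : ℕ → ℝ} {M : ℝ} (hM : ∀ k, |α k| ≤ M)
    (x : lp (fun _ : ℕ => ℝ) 2) : Memℓp (fun k => α k * x k) 2 := by
  apply memℓp_gen
  have hx : Summable fun k => ‖x k‖ ^ (2:ℝ≥0∞).toReal := (lp.memℓp x).summable (by norm_num)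
  have hg : Summable fun k => M^2 * ‖x k‖ ^ (2:ℝ≥0∞).toReal := hx.mul_left _
  refine Summable.of_nonneg_of_le (fun k => by positivity) (fun k => ?_) hg
  rw [rp2, rp2]
  calc ‖α k * x k‖ ^ 2 = (|α k| * ‖x k‖)^2 := by rw [norm_mul]; norm_num
    _ ≤ (M * ‖x k‖)^2 := by
        apply pow_le_pow_left₀ (by positivity)
        exact mul_le_mul_of_nonneg_right (hM k) (norm_nonneg _)
    _ = M^2 * ‖x k‖^2 := by ring

lemma exists_bound_of_eventually (α : ℕ → ℝ) (N : ℕ) (h : ∀ k, N < k → |α k| ≤ 1) :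
    ∃ M, ∀ k, |α k| ≤ M := by
  refine ⟨max 1 ((Finset.range (N+1)).sup' (by simp) fun k => |α k|), fun k => ?_⟩
  rcases le_or_gt k N with hk | hk
  · exact le_max_of_le_right (Finset.le_sup' (f := fun k => |α k|)
      (Finset.mem_range.mpr (Nat.lt_succ_of_le hk)))
  · exact le_max_of_le_left (h k hk)

lemma exists_diag {X : Type*} [NormedAddCommGroup X] [InnerProductSpace ℝ X] [CompleteSpace X]
    (e : HilbertBasis ℕ ℝ X) (α : ℕ → ℝ) (M : ℝ) (hM : ∀ k, |α k| ≤ M) :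
    ∃ A : X →L[ℝ] X, ∀ (x : X) (k : ℕ), ⟪e k, A x⟫ = α k * ⟪e k, x⟫ := by
  have hM0 : 0 ≤ M := (abs_nonneg _).trans (hM 0)
  have hmem : ∀ x : lp (fun _ : ℕ => ℝ) 2, Memℓp (fun k => α k * x k) 2 :=
    fun x => memℓp_bounded_mul hM x
  classical
  let L : lp (fun _ : ℕ => ℝ) 2 →ₗ[ℝ] lp (fun _ : ℕ => ℝ) 2 :=
  { toFun := fun x => ⟨fun k => α k * x k, hmem x⟩
    map_add' := fun x y => by
      apply lp.ext
      funext k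
      simp only [lp.coeFn_add, Pi.add_apply]
      show α k * (x + y) k = α k * x k + α k * y k
      rw [lp.coeFn_add]
      simp [mul_add]
    map_smul' := fun c x => by
      apply lp.ext
      funext k
      show α k * (c • x) k = (c • (⟨fun k => α k * x k, hmem x⟩ : lp (fun _ : ℕ => ℝ) 2)) k
      rw [lp.coeFn_smul, lp.coeFn_smul]
      simp [smul_eq_mul]
      ring }
  have hLcoe : ∀ (x : lp (fun _ : ℕ => ℝ) 2) (k : ℕ), (L x) k = α k * x k := fun x k => rfl
  have hinR : ∀ a b : ℝ, ⟪a, b⟫ = a * b := fun a b => by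
    simp [RCLike.inner_apply, starRingEnd_apply]; ring
  have hbound : ∀ x : lp (fun _ : ℕ => ℝ) 2, ‖L x‖ ≤ M * ‖x‖ := by
    intro x
    have hsq : ‖L x‖^2 ≤ (M * ‖x‖)^2 := by
      rw [← real_inner_self_eq_norm_sq (L x)]
      have h1 : ⟪L x, L x⟫ = ∑' k, (α k * x k) * (α k * x k) := by
        rw [lp.inner_eq_tsum]
        exact tsum_congr fun k => by rw [hLcoe, hinR]
      have h2 : (∑' k, (x k) * (x k)) = ‖x‖^2 := by
        rw [← real_inner_self_eq_norm_sq x, lp.inner_eq_tsum]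
        exact (tsum_congr fun k => by rw [hinR]).symm
      have hs1 : Summable fun k => (α k * x k) * (α k * x k) := by
        have := lp.summable_inner (𝕜 := ℝ) (L x) (L x)
        refine this.congr fun k => ?_
        rw [hLcoe, hinR]
      have hs2 : Summable fun k => M^2 * ((x k) * (x k)) := by
        have := lp.summable_inner (𝕜 := ℝ) x x
        exact ((this.congr fun k => by rw [hinR]).mul_left _)
      rw [h1]
      calc (∑' k, (α k * x k) * (α k * x k)) ≤ ∑' k, M^2 * ((x k) * (x k)) := by
            refine Summable.tsum_le_tsum (fun k => ?_) hs1 hs2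
            have : (α k * x k) * (α k * x k) = (α k)^2 * (x k)^2 := by ring
            rw [this]
            have h4 : (α k)^2 ≤ M^2 := by
              rw [← sq_abs]
              exact pow_le_pow_left₀ (abs_nonneg _) (hM k) 2
            nlinarith [sq_nonneg (x k)]
        _ = M^2 * ∑' k, (x k) * (x k) := by rw [tsum_mul_left]
        _ = (M * ‖x‖)^2 := by rw [h2]; ring
    have h5 := Real.sqrt_le_sqrt hsq
    rwa [Real.sqrt_sq (norm_nonneg _), Real.sqrt_sq (by positivity)] at h5
  let L' : lp (fun _ : ℕ => ℝ) 2 →L[ℝ] lp (fun _ : ℕ => ℝ) 2 := L.mkContinuous M hbound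
  refine ⟨((e.repr.symm.toContinuousLinearEquiv : lp (fun _ : ℕ => ℝ) 2 ≃L[ℝ] X) :
      lp (fun _ : ℕ => ℝ) 2 →L[ℝ] X).comp (L'.comp
      ((e.repr.toContinuousLinearEquiv : X ≃L[ℝ] lp (fun _ : ℕ => ℝ) 2) :
        X →L[ℝ] lp (fun _ : ℕ => ℝ) 2)), fun x k => ?_⟩
  rw [← e.repr_apply_apply, ← e.repr_apply_apply]
  show e.repr (e.repr.symm (L' (e.repr x))) k = α k * e.repr x k
  rw [LinearIsometryEquiv.apply_symm_apply]
  exact hLcoe (e.repr x) k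


set_option maxHeartbeats 1000000 in
/-- Given a compact injective operator `T` with singular system `(τ_k, e_k, f_k)`,
`σ > 0`, `φ ∈ X`, and `Φ† ∈ Y` in the closed linear span of the `f_k` satisfying the
compatibility conditions (a) and (b) below, there exists a sequence `(C_n)` of
self-adjoint, positive definite, trace-class operators on `X`, each commuting with
`T*T`, such that `‖Φ_MAP(C_n) − Φ†‖ → 0`, where
`Φ_MAP(C) = T C^{1/2}(C^{1/2}T*TC^{1/2} + σ²Id)⁻¹ C^{1/2}φ`.  In the conclusion,
`S n` denotes the positive square root of `C n`, and `B n` the inverse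
`(C_n^{1/2}T*TC_n^{1/2} + σ²Id)⁻¹`; since each `C n` is a positive operator, the trace
condition is expressed as summability of `k ↦ ⟨C_n e_k, e_k⟩` over the orthonormal
basis `(e_k)`. -/
theorem exists_prior_covariances_probe_tendsto_optimal
    {X Y : Type*}
    [NormedAddCommGroup X] [InnerProductSpace ℝ X] [CompleteSpace X]
    [TopologicalSpace.SeparableSpace X]
    [NormedAddCommGroup Y] [InnerProductSpace ℝ Y] [CompleteSpace Y]
    [TopologicalSpace.SeparableSpace Y]
    (T : X →L[ℝ] Y) (hTinj : Function.Injective T) (hTcomp : IsCompactOperator T)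
    -- singular system of `T`
    (e : HilbertBasis ℕ ℝ X) (f : ℕ → Y) (hf : Orthonormal ℝ f)
    (τ : ℕ → ℝ) (hτpos : ∀ k, 0 < τ k)
    (hT : ∀ x : X, T x = ∑' k : ℕ, (τ k * ⟪e k, x⟫) • f k)
    (σ : ℝ) (hσ : 0 < σ) (φ : X)
    (Φdag : Y) (hΦdagmem : Φdag ∈ (Submodule.span ℝ (Set.range f)).topologicalClosure)
    -- condition (a)
    (ha : ∀ k : ℕ, ⟪(ContinuousLinearMap.adjoint T) Φdag, e k⟫ = 0 → ⟪φ, e k⟫ = 0)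
    -- condition (b)
    (hb : ∀ k : ℕ, ⟪(ContinuousLinearMap.adjoint T) Φdag, e k⟫ ≠ 0 →
      ⟪φ - (ContinuousLinearMap.adjoint T) Φdag, e k⟫ ≠ 0 →
      0 < ⟪(ContinuousLinearMap.adjoint T) Φdag, e k⟫
        / ⟪φ - (ContinuousLinearMap.adjoint T) Φdag, e k⟫) :
    ∃ C S B : ℕ → (X →L[ℝ] X),
      (∀ n, IsSelfAdjoint (C n))
      ∧ (∀ n, ∀ x : X, x ≠ 0 → 0 < ⟪(C n) x, x⟫)
      -- trace class (as `C n` is positive, this is summability of the diagonal):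
      ∧ (∀ n, Summable fun k : ℕ => ⟪(C n) (e k), e k⟫)
      ∧ (∀ n, C n ∘L ((ContinuousLinearMap.adjoint T) ∘L T)
          = ((ContinuousLinearMap.adjoint T) ∘L T) ∘L C n)
      -- `S n` is the positive square root of `C n`:
      ∧ (∀ n, IsSelfAdjoint (S n) ∧ (∀ x : X, 0 ≤ ⟪(S n) x, x⟫) ∧ S n ∘L S n = C n)
      -- `B n` is the inverse of `C_n^{1/2} T* T C_n^{1/2} + σ² Id`:
      ∧ (∀ n, B n ∘L (S n ∘L (ContinuousLinearMap.adjoint T) ∘L T ∘L S n + σ ^ 2 • 1) = 1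
          ∧ (S n ∘L (ContinuousLinearMap.adjoint T) ∘L T ∘L S n + σ ^ 2 • 1) ∘L B n = 1)
      ∧ Filter.Tendsto (fun n => ‖T ((S n) ((B n) ((S n) φ))) - Φdag‖)
          Filter.atTop (nhds 0) := by
    classical
  -- extensionality via the Hilbert basis
  have hxext : ∀ x y : X, (∀ k, ⟪e k, x⟫ = ⟪e k, y⟫) → x = y := by
    intro x y h
    apply e.repr.injective
    apply lp.ext
    funext k
    rw [e.repr_apply_apply, e.repr_apply_apply]
    exact h k
  have hAext : ∀ A B : X →L[ℝ] X, (∀ (x : X) (k : ℕ), ⟪e k, A x⟫ = ⟪e k, B x⟫) → A = B := by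
    intro A B h
    ext x
    exact hxext _ _ (h x)
  have hee : ∀ k, ⟪e k, e k⟫ = (1:ℝ) := by
    intro k
    rw [real_inner_self_eq_norm_sq, e.orthonormal.1 k]; norm_num
  have heo : ∀ j k : ℕ, j ≠ k → ⟪e j, e k⟫ = 0 := fun j k hjk => e.orthonormal.2 hjk
  -- T on basis vectors
  have hTe : ∀ k, T (e k) = τ k • f k := by
    intro k
    rw [hT (e k)]
    rw [tsum_eq_single k ?_]
    · rw [hee k, mul_one]
    · intro j hjk
      rw [heo j k hjk, mul_zero, zero_smul]
  have hτle : ∀ k, |τ k| ≤ ‖T‖ := by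
    intro k
    have h1 := T.le_opNorm (e k)
    rw [hTe k, e.orthonormal.1 k, mul_one, norm_smul, hf.1 k, mul_one] at h1
    exact h1.trans (le_refl _)
  -- the isometry from ℓ² to Y built on the orthonormal family f
  set V : Π _ : ℕ, ℝ →ₗᵢ[ℝ] Y := fun i => LinearIsometry.toSpanSingleton ℝ Y (hf.1 i) with hV
  have hOF : OrthogonalFamily ℝ (fun _ : ℕ => ℝ) V := hf.orthogonalFamily
  set LI : lp (fun _ : ℕ => ℝ) 2 →ₗᵢ[ℝ] Y := hOF.linearIsometry with hLI
  have hVap : ∀ (i : ℕ) (r : ℝ), V i r = r • f i := fun i r => rfl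
  have hinR : ∀ a b : ℝ, ⟪a, b⟫ = a * b := fun a b => by
    simp [RCLike.inner_apply, starRingEnd_apply]; ring
  -- representation of T through the isometry
  have hu : ∀ x : X, ∃ u : lp (fun _ : ℕ => ℝ) 2,
      (∀ k, u k = τ k * ⟪e k, x⟫) ∧ T x = LI u := by
    intro x
    refine ⟨⟨fun k => τ k * e.repr x k, memℓp_bounded_mul hτle (e.repr x)⟩, fun k => by
      show τ k * e.repr x k = _
      rw [e.repr_apply_apply], ?_⟩
    rw [hT x, hOF.linearIsometry_apply]
    refine tsum_congr fun k => ?_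
    rw [hVap]
    show (τ k * ⟪e k, x⟫) • f k = (τ k * e.repr x k) • f k
    rw [e.repr_apply_apply]
  choose w hw1 hw2 using hu
  have hfk : ∀ k, f k = LI (lp.single 2 k (1:ℝ)) := by
    intro k
    rw [hOF.linearIsometry_apply_single, hVap, one_smul]
  have hfT : ∀ (x : X) (k : ℕ), ⟪f k, T x⟫ = τ k * ⟪e k, x⟫ := by
    intro x k
    rw [hw2 x, hfk k, LinearIsometry.inner_map_map, lp.inner_single_left, hinR, one_mul]
    exact hw1 x k
  -- Φdag is in the range of the isometry
  have hrange : Φdag ∈ LinearMap.range LI.toLinearMap := by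
    rw [hLI, hOF.range_linearIsometry]
    convert hΦdagmem using 2
    · rfl
    rw [Submodule.span_range_eq_iSup]
    congr 1
    funext i
    exact (LinearMap.span_singleton_eq_range ℝ Y (f i)).symm ▸ rfl
  obtain ⟨a, haΦ⟩ := hrange
  have hfa : ∀ k, ⟪f k, Φdag⟫ = a k := by
    intro k
    rw [← haΦ]
    show ⟪f k, LI a⟫ = a k
    rw [hfk k, LinearIsometry.inner_map_map, lp.inner_single_left, hinR, one_mul]
  set d : ℕ → ℝ := fun k => a k with hdDef
  set φh : ℕ → ℝ := fun k => ⟪e k, φ⟫ with hφhDef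
  have hda : ∀ k, ⟪(ContinuousLinearMap.adjoint T) Φdag, e k⟫ = τ k * d k := by
    intro k
    rw [real_inner_comm, ContinuousLinearMap.adjoint_inner_right, hTe k,
      real_inner_smul_left, hfa k]
  have hφa : ∀ k, ⟪φ - (ContinuousLinearMap.adjoint T) Φdag, e k⟫ = φh k - τ k * d k := by
    intro k
    rw [inner_sub_left, hda k]
    exact congrArg (· - τ k * d k) (real_inner_comm φ (e k)).symm
  -- T* T is diagonal
  have hTT : ∀ (x : X) (k : ℕ),
      ⟪e k, (ContinuousLinearMap.adjoint T) (T x)⟫ = τ k ^ 2 * ⟪e k, x⟫ := by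
    intro x k
    rw [ContinuousLinearMap.adjoint_inner_right, hTe k, real_inner_smul_left, hfT x k]
    ring
  -- the diagonal coefficients
  set c : ℕ → ℕ → ℝ := fun n k =>
    if n < k then (1/2:ℝ)^k
    else if d k = 0 then (1/2:ℝ)^k
    else if φh k - τ k * d k = 0 then ((n:ℝ)+1) * 2^k * |d k| * σ^2 / (τ k)^2
    else σ^2 * d k / (τ k * (φh k - τ k * d k)) with hcDef
  have hcpos : ∀ n k, 0 < c n k := by
    intro n k
    rw [hcDef]
    dsimp only
    split_ifs with h1 h2 h3
    · positivity
    · positivity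
    · have hd : 0 < |d k| := abs_pos.mpr h2
      have hτ : (0:ℝ) < τ k := hτpos k
      positivity
    · have hτd : ⟪(ContinuousLinearMap.adjoint T) Φdag, e k⟫ ≠ 0 := by
        rw [hda k]
        exact mul_ne_zero (hτpos k).ne' h2
      have hφd : ⟪φ - (ContinuousLinearMap.adjoint T) Φdag, e k⟫ ≠ 0 := by
        rw [hφa k]; exact h3
      have hpos := hb k hτd hφd
      rw [hda k, hφa k] at hpos
      have hτ : (0:ℝ) < τ k := hτpos k
      have key : σ^2 * d k / (τ k * (φh k - τ k * d k))
          = (σ^2 / (τ k)^2) * (τ k * d k / (φh k - τ k * d k)) := by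
        field_simp
      rw [key]
      exact mul_pos (by positivity) hpos
  have hden : ∀ n k, 0 < c n k * τ k ^ 2 + σ ^ 2 := by
    intro n k
    have := mul_pos (hcpos n k) (pow_pos (hτpos k) 2)
    positivity
  have hctail : ∀ n k, n < k → c n k = (1/2:ℝ)^k := by
    intro n k h
    rw [hcDef]
    exact if_pos h
  -- the operators
  have hCex : ∀ n, ∃ A : X →L[ℝ] X, ∀ (x : X) (k : ℕ), ⟪e k, A x⟫ = c n k * ⟪e k, x⟫ := by
    intro n
    obtain ⟨M, hM⟩ := exists_bound_of_eventually (c n) n (fun k hk => by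
      rw [hctail n k hk, abs_of_pos (by positivity)]
      exact pow_le_one₀ (by norm_num) (by norm_num))
    exact exists_diag e (c n) M hM
  have hSex : ∀ n, ∃ A : X →L[ℝ] X, ∀ (x : X) (k : ℕ),
      ⟪e k, A x⟫ = Real.sqrt (c n k) * ⟪e k, x⟫ := by
    intro n
    obtain ⟨M, hM⟩ := exists_bound_of_eventually (fun k => Real.sqrt (c n k)) n (fun k hk => by
      rw [abs_of_nonneg (Real.sqrt_nonneg _)]
      rw [show (1:ℝ) = Real.sqrt 1 by rw [Real.sqrt_one]]
      apply Real.sqrt_le_sqrt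
      rw [hctail n k hk]
      exact pow_le_one₀ (by norm_num) (by norm_num))
    exact exists_diag e _ M hM
  have hBex : ∀ n, ∃ A : X →L[ℝ] X, ∀ (x : X) (k : ℕ),
      ⟪e k, A x⟫ = (c n k * τ k ^ 2 + σ ^ 2)⁻¹ * ⟪e k, x⟫ := by
    intro n
    refine exists_diag e _ ((σ^2)⁻¹) (fun k => ?_)
    rw [abs_of_pos (inv_pos.mpr (hden n k))]
    exact inv_anti₀ (by positivity) (by nlinarith [mul_pos (hcpos n k) (pow_pos (hτpos k) 2)])
  choose C hC using hCex
  choose S hS using hSex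
  choose B hB using hBex
  -- diagonal action on basis vectors
  have diag_basis : ∀ (A : X →L[ℝ] X) (α : ℕ → ℝ),
      (∀ (x : X) (k : ℕ), ⟪e k, A x⟫ = α k * ⟪e k, x⟫) → ∀ k, A (e k) = α k • e k := by
    intro A α hA k
    apply hxext
    intro j
    rw [hA, real_inner_smul_right]
    rcases eq_or_ne j k with rfl | hjk
    · rfl
    · rw [heo j k hjk, mul_zero, mul_zero]
  have diag_sa : ∀ (A : X →L[ℝ] X) (α : ℕ → ℝ),
      (∀ (x : X) (k : ℕ), ⟪e k, A x⟫ = α k * ⟪e k, x⟫) → IsSelfAdjoint A := by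
    intro A α hA
    rw [ContinuousLinearMap.isSelfAdjoint_iff']
    apply hAext
    intro x k
    rw [ContinuousLinearMap.adjoint_inner_right, diag_basis A α hA k,
      real_inner_smul_left, hA]
  have diag_hasSum : ∀ (A : X →L[ℝ] X) (α : ℕ → ℝ),
      (∀ (x : X) (k : ℕ), ⟪e k, A x⟫ = α k * ⟪e k, x⟫) → ∀ x : X,
      HasSum (fun k => α k * ⟪e k, x⟫^2) ⟪A x, x⟫ := by
    intro A α hA x
    have h0 := e.hasSum_inner_mul_inner (A x) x
    have heq : (fun k => ⟪A x, e k⟫ * ⟪e k, x⟫) = fun k => α k * ⟪e k, x⟫^2 := by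
      funext k
      rw [real_inner_comm (e k) (A x), hA]
      ring
    rwa [heq] at h0
  refine ⟨C, S, B, fun n => diag_sa (C n) (c n) (hC n), ?_, ?_, ?_, ?_, ?_, ?_⟩
  · -- positive definite
    intro n x hx
    have hsum := diag_hasSum (C n) (c n) (hC n) x
    have hk0 : ∃ k, ⟪e k, x⟫ ≠ 0 := by
      by_contra h
      push_neg at h
      exact hx (hxext x 0 fun k => by rw [h k, inner_zero_right])
    obtain ⟨k0, hk0⟩ := hk0
    have hsq : 0 < ⟪e k0, x⟫^2 := by
      have := pow_pos (abs_pos.mpr hk0) 2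
      rwa [sq_abs] at this
    have := Summable.tsum_pos hsum.summable
      (fun k => mul_nonneg (hcpos n k).le (sq_nonneg _)) k0 (mul_pos (hcpos n k0) hsq)
    rwa [hsum.tsum_eq] at this
  · -- trace class
    intro n
    have hdiag : ∀ k, ⟪(C n) (e k), e k⟫ = c n k := by
      intro k
      rw [real_inner_comm, hC n (e k) k, hee k, mul_one]
    rw [show (fun k : ℕ => ⟪(C n) (e k), e k⟫) = c n from funext hdiag]
    rw [← summable_nat_add_iff (n+1)]
    have : ∀ k : ℕ, c n (k + (n+1)) = (1/2:ℝ)^(n+1) * (1/2:ℝ)^k := by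
      intro k
      rw [hctail n _ (by omega), ← pow_add, add_comm (n+1) k]
    rw [funext this]
    exact (summable_geometric_of_lt_one (by norm_num) (by norm_num)).mul_left _
  · -- commutes with T*T
    intro n
    apply hAext
    intro x k
    simp only [ContinuousLinearMap.comp_apply]
    rw [hC, hTT, hTT, hC]
    ring
  · -- S n is the square root
    intro n
    refine ⟨diag_sa (S n) _ (hS n), ?_, ?_⟩
    · intro x
      have hsum := diag_hasSum (S n) _ (hS n) x
      rw [← hsum.tsum_eq]
      exact tsum_nonneg fun k => by positivity
    · apply hAext
      intro x k
      simp only [ContinuousLinearMap.comp_apply]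
      rw [hS, hS, hC, ← mul_assoc, Real.mul_self_sqrt (hcpos n k).le]
  · -- B n is the inverse
    intro n
    have key : ∀ x k, ⟪e k, (S n ∘L (ContinuousLinearMap.adjoint T) ∘L T ∘L S n
        + σ ^ 2 • 1) x⟫ = (c n k * τ k ^ 2 + σ ^ 2) * ⟪e k, x⟫ := by
      intro x k
      simp only [ContinuousLinearMap.add_apply, ContinuousLinearMap.comp_apply,
        ContinuousLinearMap.smul_apply, ContinuousLinearMap.one_apply]
      rw [inner_add_right, hS, hTT, hS, real_inner_smul_right]
      generalize hsg : Real.sqrt (c n k) = s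
      rw [← Real.mul_self_sqrt (hcpos n k).le, hsg]
      ring
    constructor
    · apply hAext
      intro x k
      simp only [ContinuousLinearMap.comp_apply, ContinuousLinearMap.one_apply]
      rw [hB, key, ← mul_assoc, inv_mul_cancel₀ (hden n k).ne']
      ring
    · apply hAext
      intro x k
      simp only [ContinuousLinearMap.comp_apply, ContinuousLinearMap.one_apply]
      rw [key, hB, ← mul_assoc, mul_inv_cancel₀ (hden n k).ne']
      ring
  · -- the convergence
    set G : ℕ → ℕ → ℝ := fun n k =>
      τ k * (c n k * φh k * (c n k * τ k ^ 2 + σ ^ 2)⁻¹) with hGDef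
    have hvG : ∀ n k, w (S n (B n (S n φ))) k = G n k := by
      intro n k
      rw [hw1, hS, hB, hS, hGDef]
      dsimp only
      generalize hsg : Real.sqrt (c n k) = s
      rw [← Real.mul_self_sqrt (hcpos n k).le, hsg]
      ring
    have haΦ' : LI a = Φdag := haΦ
    have hnormeq : ∀ n, ‖T (S n (B n (S n φ))) - Φdag‖
        = Real.sqrt (∑' k, (G n k - d k)^2) := by
      intro n
      rw [hw2 (S n (B n (S n φ))), ← haΦ', ← map_sub, LI.norm_map]
      rw [← Real.sqrt_sq (norm_nonneg (w (S n (B n (S n φ))) - a))]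
      congr 1
      rw [← real_inner_self_eq_norm_sq, lp.inner_eq_tsum]
      refine tsum_congr fun k => ?_
      rw [hinR]
      have hsub : (w (S n (B n (S n φ))) - a) k = G n k - d k := by
        rw [lp.coeFn_sub, Pi.sub_apply, hvG]
      rw [hsub]
      ring
    have hφhle : ∀ k, |φh k| ≤ ‖φ‖ := by
      intro k
      have h := abs_real_inner_le_norm (e k) φ
      rwa [e.orthonormal.1 k, one_mul] at h
    set K : ℝ := ‖T‖ * ‖φ‖ / σ^2 with hKDef
    have hK0 : 0 ≤ K := by positivity
    have hE2 : ∀ n k, n < k → |G n k| ≤ K * (1/2:ℝ)^k := by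
      intro n k hnk
      have hd2 : (0:ℝ) < (1/2:ℝ)^k * τ k^2 + σ^2 := by
        have := hτpos k
        positivity
      rw [hGDef]
      dsimp only
      rw [hctail n k hnk]
      have hstep : |τ k * ((1/2:ℝ)^k * φh k * ((1/2:ℝ)^k * τ k ^ 2 + σ ^ 2)⁻¹)|
          = |τ k| * ((1/2:ℝ)^k * |φh k| * |((1/2:ℝ)^k * τ k ^ 2 + σ ^ 2)⁻¹|) := by
        rw [abs_mul, abs_mul, abs_mul, abs_of_nonneg (by positivity : (0:ℝ) ≤ (1/2:ℝ)^k)]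
      rw [hstep]
      have h1 : |((1/2:ℝ)^k * τ k ^ 2 + σ ^ 2)⁻¹| ≤ (σ^2)⁻¹ := by
        rw [abs_of_pos (inv_pos.mpr hd2)]
        exact inv_anti₀ (by positivity) (by nlinarith [mul_pos (pow_pos (by norm_num : (0:ℝ)<1/2) k) (pow_pos (hτpos k) 2)])
      have h2 : (1/2:ℝ)^k * |φh k| * |((1/2:ℝ)^k * τ k ^ 2 + σ ^ 2)⁻¹|
          ≤ (1/2:ℝ)^k * (‖φ‖ * (σ^2)⁻¹) := by
        rw [mul_assoc]
        refine mul_le_mul_of_nonneg_left ?_ (by positivity)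
        exact mul_le_mul (hφhle k) h1 (abs_nonneg _) (norm_nonneg _)
      calc |τ k| * ((1/2:ℝ)^k * |φh k| * |((1/2:ℝ)^k * τ k ^ 2 + σ ^ 2)⁻¹|)
          ≤ ‖T‖ * ((1/2:ℝ)^k * (‖φ‖ * (σ^2)⁻¹)) :=
            mul_le_mul (hτle k) h2 (by positivity) (norm_nonneg _)
        _ = K * (1/2:ℝ)^k := by rw [hKDef]; ring
    have hE1 : ∀ n k, k ≤ n → |G n k - d k| ≤ (1/2:ℝ)^k * (1/((n:ℝ)+1)) := by
      intro n k hkn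
      have hnk : ¬ n < k := not_lt.mpr hkn
      by_cases hd0 : d k = 0
      · have hφ0 : φh k = 0 := by
          have h0 : ⟪(ContinuousLinearMap.adjoint T) Φdag, e k⟫ = 0 := by
            rw [hda k, hd0, mul_zero]
          have h1 := ha k h0
          show ⟪e k, φ⟫ = 0
          rw [← real_inner_comm φ (e k)] at h1
          exact h1
        rw [hGDef]
        dsimp only
        rw [hφ0, hd0, mul_zero, zero_mul, mul_zero, sub_zero, abs_zero]
        positivity
      · by_cases hdeg : φh k - τ k * d k = 0
        · have hceq : c n k = ((n:ℝ)+1) * 2^k * |d k| * σ^2 / (τ k)^2 := by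
            rw [hcDef]
            dsimp only
            rw [if_neg hnk, if_neg hd0, if_pos hdeg]
          have hτ2 : (τ k)^2 ≠ 0 := (pow_pos (hτpos k) 2).ne'
          have hcτ : c n k * τ k^2 = ((n:ℝ)+1) * 2^k * |d k| * σ^2 := by
            rw [hceq, div_mul_cancel₀ _ hτ2]
          have hφeq : φh k = τ k * d k := by linarith
          have hden' : (c n k * τ k ^ 2 + σ ^ 2) ≠ 0 := (hden n k).ne'
          have herr : G n k - d k = -(d k * σ^2) / (c n k * τ k^2 + σ^2) := by
            rw [hGDef]
            dsimp only
            rw [hφeq]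
            rw [eq_div_iff hden']
            linear_combination (τ k^2 * c n k * d k) * inv_mul_cancel₀ hden'
          have habs : |G n k - d k| = |d k| * σ^2 / (c n k * τ k^2 + σ^2) := by
            rw [herr, abs_div, abs_of_pos (hden n k), abs_neg, abs_mul,
              abs_of_pos (by positivity : (0:ℝ) < σ^2)]
          have hcτpos : (0:ℝ) < c n k * τ k^2 := mul_pos (hcpos n k) (pow_pos (hτpos k) 2)
          have hstep : |d k| * σ^2 / (c n k * τ k^2 + σ^2) ≤ |d k| * σ^2 / (c n k * τ k^2) :=
            div_le_div_of_nonneg_left (by positivity) hcτpos (by nlinarith)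
          have hfin : |d k| * σ^2 / (c n k * τ k^2) = (1/2:ℝ)^k * (1/((n:ℝ)+1)) := by
            rw [hcτ]
            have hdne : |d k| ≠ 0 := abs_ne_zero.mpr hd0
            have hσ2 : (σ:ℝ)^2 ≠ 0 := (by positivity : (0:ℝ) < σ^2).ne'
            have h2k : (2:ℝ)^k ≠ 0 := by positivity
            have hn1 : ((n:ℝ)+1) ≠ 0 := by positivity
            field_simp
            ring
            rw [← mul_pow]; norm_num
          rw [habs]
          exact hstep.trans_eq hfin
        · have hceq : c n k = σ^2 * d k / (τ k * (φh k - τ k * d k)) := by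
            rw [hcDef]
            dsimp only
            rw [if_neg hnk, if_neg hd0, if_neg hdeg]
          have hτ0 : τ k ≠ 0 := (hτpos k).ne'
          have hkey : c n k * (τ k * (φh k - τ k * d k)) = σ^2 * d k := by
            rw [hceq, div_mul_cancel₀ _ (mul_ne_zero hτ0 hdeg)]
          have hlin : τ k * (c n k * φh k) = d k * (c n k * τ k^2 + σ^2) := by
            linear_combination hkey
          have hG : G n k = d k := by
            rw [hGDef]
            dsimp only
            rw [show τ k * (c n k * φh k * (c n k * τ k ^ 2 + σ ^ 2)⁻¹)
                = τ k * (c n k * φh k) * (c n k * τ k ^ 2 + σ ^ 2)⁻¹ from by ring, hlin,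
              mul_assoc, mul_inv_cancel₀ (hden n k).ne', mul_one]
          rw [hG, sub_self, abs_zero]
          positivity
    have hq : ∀ k : ℕ, ((1/2:ℝ)^k)^2 = (1/4:ℝ)^k := by
      intro k
      rw [← pow_mul, mul_comm, pow_mul]
      norm_num
    have hbound : ∀ n k, (G n k - d k)^2 ≤ 2*(d k)^2 + (2*K^2+1) * (1/4:ℝ)^k := by
      intro n k
      rcases le_or_gt k n with hkn | hnk
      · have h1 := hE1 n k hkn
        have h2 : |G n k - d k| ≤ (1/2:ℝ)^k := by
          refine h1.trans ?_
          refine mul_le_of_le_one_right (by positivity) ?_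
          rw [div_le_one (by positivity)]
          linarith [Nat.cast_nonneg (α := ℝ) n]
        have h3 : (G n k - d k)^2 ≤ (1/4:ℝ)^k := by
          rw [← hq k, ← sq_abs]
          exact pow_le_pow_left₀ (abs_nonneg _) h2 2
        nlinarith [sq_nonneg (d k), pow_nonneg (by norm_num : (0:ℝ) ≤ 1/4) k, hK0]
      · have h2 := hE2 n k hnk
        have h3 : |G n k - d k| ≤ K * (1/2:ℝ)^k + |d k| := by
          rw [sub_eq_add_neg]
          refine (abs_add_le _ _).trans ?_
          rw [abs_neg]
          exact add_le_add_left h2 _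
        have h4 : (G n k - d k)^2 ≤ (K * (1/2:ℝ)^k + |d k|)^2 := by
          rw [← sq_abs]
          exact pow_le_pow_left₀ (abs_nonneg _) h3 2
        have h5 : (K * (1/2:ℝ)^k + |d k|)^2 ≤ 2*(d k)^2 + (2*K^2+1) * (1/4:ℝ)^k := by
          have hx := sq_abs (d k)
          nlinarith [sq_nonneg (K * (1/2:ℝ)^k - |d k|), hq k,
            pow_nonneg (by norm_num : (0:ℝ) ≤ 1/4) k, sq_nonneg K]
        exact h4.trans h5
    have hd2sum : Summable fun k => (d k)^2 := by
      have h := (lp.memℓp a).summable (p := 2) (by norm_num)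
      exact h.congr fun k => by rw [rp2, Real.norm_eq_abs, sq_abs]
    have hsummable_bound : Summable (fun k => 2*(d k)^2 + (2*K^2+1) * (1/4:ℝ)^k) := by
      exact ((hd2sum.mul_left 2)).add
        ((summable_geometric_of_lt_one (by norm_num) (by norm_num)).mul_left _)
    have hptwise : ∀ k, Filter.Tendsto (fun n => (G n k - d k)^2) Filter.atTop (nhds 0) := by
      intro k
      apply squeeze_zero_norm' (a := fun n : ℕ => ((1/2:ℝ)^k * (1/((n:ℝ)+1)))^2)
      · filter_upwards [Filter.eventually_ge_atTop k] with n hn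
        rw [Real.norm_eq_abs, abs_of_nonneg (sq_nonneg _), ← sq_abs]
        exact pow_le_pow_left₀ (abs_nonneg _) (hE1 n k hn) 2
      · have h0 : Filter.Tendsto (fun n : ℕ => 1/((n:ℝ)+1)) Filter.atTop (nhds 0) :=
          tendsto_one_div_add_atTop_nhds_zero_nat
        have h1 := (h0.const_mul ((1/2:ℝ)^k)).pow 2
        simpa using h1
    have htsum : Filter.Tendsto (fun n => ∑' k, (G n k - d k)^2) Filter.atTop (nhds 0) := by
      have h := tendsto_tsum_of_dominated_convergence hsummable_bound hptwise
        (Filter.Eventually.of_forall fun n k => by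
          rw [Real.norm_eq_abs, abs_of_nonneg (sq_nonneg _)]
          exact hbound n k)
      simpa [tsum_zero] using h
    rw [show (fun n => ‖T (S n (B n (S n φ))) - Φdag‖)
        = fun n => Real.sqrt (∑' k, (G n k - d k)^2) from funext hnormeq]
    have hc := (Real.continuous_sqrt.tendsto 0).comp htsum
    rw [Real.sqrt_zero] at hc
    exact hc
end

section
/- For every k ∈ ℕ, the probe element satisfies ⟨Φ_MAP, f_k⟩_Y = (τ_k ρ_k/(τ_k² ρ_k + σ²))·⟨φ, e_k⟩_X, and Φ_MAP is orthogonal to the orthogonal complement of the closed linear span of (f_k)_{k∈ℕ}; that is, Φ_MAP = Σ_k (τ_k ρ_k/(τ_k² ρ_k + σ²))⟨φ, e_k⟩ f_k. -/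
open scoped RealInnerProductSpace

/-- Spectral representation of the probe element: for every `k`,
`⟨Φ_MAP, f_k⟩ = (τ_k ρ_k/(τ_k² ρ_k + σ²))⟨φ, e_k⟩`, and
`Φ_MAP = Σ_k (τ_k ρ_k/(τ_k² ρ_k + σ²))⟨φ, e_k⟩ f_k` (in particular `Φ_MAP` is orthogonal
to the orthogonal complement of the closed linear span of the `f_k`).  Here `T` is a
compact operator with singular system `(τ_k, e_k, f_k)`, where `(e_k)` is an orthonormal
basis of `(ker T)^⊥`, `C₀ e_k = ρ_k e_k`, `C₀` maps `ker T` into `ker T`,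
`Φ_MAP = T C₀^{1/2}(C₀^{1/2}T*TC₀^{1/2} + σ²Id)⁻¹ C₀^{1/2}φ`, `S` denotes the positive
square root `C₀^{1/2}` of `C₀`, and `B` the inverse `(C₀^{1/2}T*TC₀^{1/2} + σ²Id)⁻¹`. -/
theorem probe_element_spectral_representation
    {X Y : Type*}
    [NormedAddCommGroup X] [InnerProductSpace ℝ X] [CompleteSpace X]
    [TopologicalSpace.SeparableSpace X]
    [NormedAddCommGroup Y] [InnerProductSpace ℝ Y] [CompleteSpace Y]
    [TopologicalSpace.SeparableSpace Y]
    (T : X →L[ℝ] Y) (hTcomp : IsCompactOperator T)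
    -- singular system of `T`
    (e : ℕ → X) (he : Orthonormal ℝ e)
    (hespan : (Submodule.span ℝ (Set.range e)).topologicalClosure
      = (LinearMap.ker (T : X →ₗ[ℝ] Y))ᗮ)
    (f : ℕ → Y) (hf : Orthonormal ℝ f)
    (τ : ℕ → ℝ) (hτpos : ∀ k, 0 < τ k)
    (hT : ∀ x : X, T x = ∑' k : ℕ, (τ k * ⟪e k, x⟫) • f k)
    -- `C₀` is diagonal on the `e_k` and maps `ker T` into `ker T`
    (C₀ : X →L[ℝ] X) (hC₀sa : IsSelfAdjoint C₀) (hC₀pos : ∀ x : X, 0 ≤ ⟪C₀ x, x⟫)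
    (ρ : ℕ → ℝ) (hρpos : ∀ k, 0 < ρ k) (hC₀e : ∀ k, C₀ (e k) = ρ k • e k)
    (hC₀ker : ∀ x : X, x ∈ LinearMap.ker (T : X →ₗ[ℝ] Y) → C₀ x ∈ LinearMap.ker (T : X →ₗ[ℝ] Y))
    (σ : ℝ) (hσ : 0 < σ) (φ : X)
    -- `S` is the positive square root `C₀^{1/2}` of `C₀`
    (S : X →L[ℝ] X) (hSsa : IsSelfAdjoint S) (hSpos : ∀ x : X, 0 ≤ ⟪S x, x⟫)
    (hS : S ∘L S = C₀)
    -- `B` is the inverse of `C₀^{1/2} T* T C₀^{1/2} + σ² Id`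
    (B : X →L[ℝ] X)
    (hB : B ∘L (S ∘L (ContinuousLinearMap.adjoint T) ∘L T ∘L S + σ ^ 2 • 1) = 1)
    (hB' : (S ∘L (ContinuousLinearMap.adjoint T) ∘L T ∘L S + σ ^ 2 • 1) ∘L B = 1) :
    (∀ k : ℕ, ⟪T (S (B (S φ))), f k⟫
        = τ k * ρ k / ((τ k) ^ 2 * ρ k + σ ^ 2) * ⟪φ, e k⟫)
    ∧ T (S (B (S φ)))
        = ∑' k : ℕ, (τ k * ρ k / ((τ k) ^ 2 * ρ k + σ ^ 2) * ⟪φ, e k⟫) • f k := by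
  classical
  set A : X →L[ℝ] X := S ∘L (ContinuousLinearMap.adjoint T) ∘L T ∘L S + σ ^ 2 • 1 with hA
  -- `S` is self-adjoint at the level of inner products
  have hSadj : ∀ x y : X, ⟪S x, y⟫ = ⟪x, S y⟫ := by
    intro x y
    conv_lhs => rw [← hSsa.adjoint_eq]
    rw [ContinuousLinearMap.adjoint_inner_left]
  -- `T e_k = τ_k • f_k`
  have hTe : ∀ k, T (e k) = τ k • f k := by
    intro k
    rw [hT (e k), tsum_eq_single k]
    · simp [real_inner_self_eq_norm_sq, he.1 k]
    · intro j hj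
      rw [he.2 hj]
      simp
  -- the singular values are bounded by `‖T‖`
  have hτb : ∀ k, τ k ≤ ‖T‖ := by
    intro k
    have h1 : ‖T (e k)‖ = τ k := by
      rw [hTe k, norm_smul, hf.1 k, Real.norm_eq_abs, abs_of_pos (hτpos k), mul_one]
    calc τ k = ‖T (e k)‖ := h1.symm
      _ ≤ ‖T‖ * ‖e k‖ := T.le_opNorm (e k)
      _ = ‖T‖ := by rw [he.1 k, mul_one]
  -- summability of the expansion of `T x`
  have hSummable : ∀ x : X, Summable (fun j => (τ j * ⟪e j, x⟫) • f j) := by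
    intro x
    have h2 : Summable fun j => ‖τ j * ⟪e j, x⟫‖ ^ 2 := by
      refine Summable.of_nonneg_of_le (fun j => by positivity) (fun j => ?_)
        ((he.inner_products_summable x).mul_left (‖T‖ ^ 2))
      have h3 : ‖τ j * ⟪e j, x⟫‖ ^ 2 = τ j ^ 2 * ‖⟪e j, x⟫‖ ^ 2 := by
        rw [norm_mul, mul_pow, Real.norm_eq_abs, sq_abs]
      rw [h3]
      have h4 : τ j ^ 2 ≤ ‖T‖ ^ 2 := by
        have := hτb j
        nlinarith [(hτpos j).le]
      have h5 : (0:ℝ) ≤ ‖⟪e j, x⟫‖ ^ 2 := by positivity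
      nlinarith
    exact (hf.orthogonalFamily.summable_iff_norm_sq_summable
      (fun j => τ j * ⟪e j, x⟫)).mpr h2
  -- inner products of `T x` with the `f_k`
  have hinner : ∀ (x : X) (k : ℕ), ⟪T x, f k⟫ = τ k * ⟪e k, x⟫ := by
    intro x k
    have hmap : ⟪f k, ∑' j, (τ j * ⟪e j, x⟫) • f j⟫
        = ∑' j, ⟪f k, (τ j * ⟪e j, x⟫) • f j⟫ :=
      (innerSL ℝ (f k)).map_tsum (hSummable x)
    rw [real_inner_comm, hT x, hmap, tsum_eq_single k]
    · simp [real_inner_smul_right, real_inner_self_eq_norm_sq, hf.1 k]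
    · intro j hj
      simp [real_inner_smul_right, hf.2 (Ne.symm hj)]
  -- `T* f_k = τ_k • e_k`
  have hT'f : ∀ k, (ContinuousLinearMap.adjoint T) (f k) = τ k • e k := by
    intro k
    refine ext_inner_right ℝ fun y => ?_
    rw [ContinuousLinearMap.adjoint_inner_left, real_inner_comm, hinner y k,
      real_inner_smul_left]
  -- `S e_k = √ρ_k • e_k`
  have hSe : ∀ k, S (e k) = Real.sqrt (ρ k) • e k := by
    intro k
    set r := Real.sqrt (ρ k) with hrdef
    have hr : 0 < r := Real.sqrt_pos.mpr (hρpos k)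
    have hrr : r * r = ρ k := Real.mul_self_sqrt (hρpos k).le
    set w : X := S (e k) - r • e k with hw
    have hSS : S (S (e k)) = ρ k • e k := by
      have h1 : (S ∘L S) (e k) = C₀ (e k) := by rw [hS]
      simpa [ContinuousLinearMap.comp_apply, hC₀e k] using h1
    have hSw : S w = -(r • w) := by
      rw [hw, map_sub, map_smul, hSS, smul_sub, smul_smul, hrr, neg_sub]
    have h0 : 0 ≤ ⟪S w, w⟫ := hSpos w
    rw [hSw] at h0
    have h1 : ⟪-(r • w), w⟫ = -(r * ⟪w, w⟫) := by
      rw [inner_neg_left, real_inner_smul_left]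
    rw [h1] at h0
    have h2 : ⟪w, w⟫ ≤ 0 := by nlinarith [real_inner_self_nonneg (x := w)]
    have hw0 : w = 0 := real_inner_self_nonpos.mp h2
    have := sub_eq_zero.mp hw0
    exact this
  -- `A e_k = (τ_k² ρ_k + σ²) • e_k`
  have hAe : ∀ k, A (e k) = (τ k ^ 2 * ρ k + σ ^ 2) • e k := by
    intro k
    have hrr : Real.sqrt (ρ k) * Real.sqrt (ρ k) = ρ k := Real.mul_self_sqrt (hρpos k).le
    have h1 : A (e k)
        = (Real.sqrt (ρ k) * τ k * τ k * Real.sqrt (ρ k)) • e k + σ ^ 2 • e k := by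
      simp [hA, ContinuousLinearMap.comp_apply, ContinuousLinearMap.add_apply,
        hSe k, map_smul, hTe k, hT'f k, smul_smul]
    rw [h1, ← add_smul]
    congr 1
    linear_combination τ k ^ 2 * hrr
  -- `A` is symmetric
  have hAsym : ∀ x y : X, ⟪A x, y⟫ = ⟪x, A y⟫ := by
    intro x y
    have hl : ⟪A x, y⟫ = ⟪T (S x), T (S y)⟫ + σ ^ 2 * ⟪x, y⟫ := by
      simp only [hA, ContinuousLinearMap.add_apply, ContinuousLinearMap.comp_apply,
        ContinuousLinearMap.smul_apply, ContinuousLinearMap.one_apply, inner_add_left]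
      rw [hSadj, ContinuousLinearMap.adjoint_inner_left, real_inner_smul_left]
    have hr : ⟪x, A y⟫ = ⟪T (S x), T (S y)⟫ + σ ^ 2 * ⟪x, y⟫ := by
      simp only [hA, ContinuousLinearMap.add_apply, ContinuousLinearMap.comp_apply,
        ContinuousLinearMap.smul_apply, ContinuousLinearMap.one_apply, inner_add_right]
      rw [← hSadj, ContinuousLinearMap.adjoint_inner_right, real_inner_smul_right]
    rw [hl, hr]
  -- the key computation
  have key : ∀ k : ℕ, ⟪T (S (B (S φ))), f k⟫
      = τ k * ρ k / ((τ k) ^ 2 * ρ k + σ ^ 2) * ⟪φ, e k⟫ := by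
    intro k
    have hd : (0:ℝ) < τ k ^ 2 * ρ k + σ ^ 2 :=
      add_pos_of_nonneg_of_pos (mul_nonneg (sq_nonneg _) (hρpos k).le) (pow_pos hσ 2)
    have hrr : Real.sqrt (ρ k) * Real.sqrt (ρ k) = ρ k := Real.mul_self_sqrt (hρpos k).le
    have hABS : A (B (S φ)) = S φ := by
      have h1 : (A ∘L B) (S φ) = (1 : X →L[ℝ] X) (S φ) := by rw [hB']
      simpa [ContinuousLinearMap.comp_apply] using h1
    have step1 : ⟪T (S (B (S φ))), f k⟫ = τ k * ⟪e k, S (B (S φ))⟫ :=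
      hinner _ k
    have step2 : ⟪e k, S (B (S φ))⟫ = Real.sqrt (ρ k) * ⟪e k, B (S φ)⟫ := by
      rw [← hSadj, hSe k, real_inner_smul_left]
    have step3 : ⟪e k, B (S φ)⟫
        = (τ k ^ 2 * ρ k + σ ^ 2)⁻¹ * (Real.sqrt (ρ k) * ⟪e k, φ⟫) := by
      have hAe' : (e k : X) = (τ k ^ 2 * ρ k + σ ^ 2)⁻¹ • A (e k) := by
        rw [hAe k, smul_smul, inv_mul_cancel₀ hd.ne', one_smul]
      calc ⟪e k, B (S φ)⟫
          = ⟪(τ k ^ 2 * ρ k + σ ^ 2)⁻¹ • A (e k), B (S φ)⟫ := by rw [← hAe']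
        _ = (τ k ^ 2 * ρ k + σ ^ 2)⁻¹ * ⟪A (e k), B (S φ)⟫ := real_inner_smul_left _ _ _
        _ = (τ k ^ 2 * ρ k + σ ^ 2)⁻¹ * ⟪e k, A (B (S φ))⟫ := by rw [hAsym]
        _ = (τ k ^ 2 * ρ k + σ ^ 2)⁻¹ * ⟪e k, S φ⟫ := by rw [hABS]
        _ = (τ k ^ 2 * ρ k + σ ^ 2)⁻¹ * (Real.sqrt (ρ k) * ⟪e k, φ⟫) := by
            rw [← hSadj, hSe k, real_inner_smul_left]
    have hc : ⟪e k, φ⟫ = ⟪φ, e k⟫ := real_inner_comm _ _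
    rw [step1, step2, step3, div_eq_mul_inv]
    simp only [hc]
    linear_combination (τ k * (τ k ^ 2 * ρ k + σ ^ 2)⁻¹ * ⟪φ, e k⟫) * hrr
  refine ⟨key, ?_⟩
  rw [hT (S (B (S φ)))]
  exact tsum_congr fun k => by rw [← hinner (S (B (S φ))) k, key k]
end

section
/- Let (τ_k)_{k∈ℕ} be a sequence of positive real numbers with Σ_k τ_k² < ∞, let μ ≥ 1, ν > 0, and γ > 0, and let (U_k)_{k∈ℕ} be a sequence of independent real random variables on a probability space with U_k distributed as the Gaussian measure N(0, γ²τ_k^{2μ}). If Σ_k τ_k^{2(μ−ν)} = ∞, then almost surely the series Σ_k τ_k^{−2ν} U_k² diverges, i.e. the event that Σ_k τ_k^{−2ν} U_k² < ∞ has probability zero. -/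
open MeasureTheory ProbabilityTheory Filter

private lemma exp_neg_le_one_sub_half {b : ℝ} (hb0 : 0 ≤ b) (hb1 : b ≤ 1) :
    Real.exp (-b) ≤ 1 - b / 2 := by
  have h := convexOn_exp.2 (Set.mem_univ (-1 : ℝ)) (Set.mem_univ (0 : ℝ))
    hb0 (by linarith : (0:ℝ) ≤ 1 - b) (by ring)
  simp only [smul_eq_mul, mul_neg_one, mul_zero, add_zero, Real.exp_zero, mul_one] at h
  have he : Real.exp (-1) ≤ 1 / 2 := by
    have h2 : (2 : ℝ) ≤ Real.exp 1 := by
      have := Real.add_one_le_exp (1 : ℝ); linarith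
    rw [Real.exp_neg]
    rw [div_eq_inv_mul, mul_one]
    exact inv_anti₀ (by norm_num) h2
  have hb' : b * Real.exp (-1) ≤ b * (1 / 2) :=
    mul_le_mul_of_nonneg_left he hb0
  calc Real.exp (-b) ≤ b * Real.exp (-1) + (1 - b) := h
    _ ≤ b * (1 / 2) + (1 - b) := by linarith
    _ = 1 - b / 2 := by ring

private lemma iIndepFun_ae_congr {Ω : Type*} [MeasurableSpace Ω] {P : Measure Ω}
    {f g : ℕ → Ω → ℝ} (h : iIndepFun f P)
    (hfg : ∀ i, f i =ᵐ[P] g i) : iIndepFun g P := by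
  rw [iIndepFun_iff_measure_inter_preimage_eq_mul] at h ⊢
  intro S sets hsets
  have hae : ∀ i : ℕ, ∀ s : Set ℝ, (f i ⁻¹' s : Set Ω) =ᵐ[P] (g i ⁻¹' s : Set Ω) := by
    intro i s
    refine Filter.eventuallyEq_set.2 ?_
    filter_upwards [hfg i] with ω hω
    rw [Set.mem_preimage, Set.mem_preimage, hω]
  have h1 : P (⋂ i ∈ S, g i ⁻¹' sets i) = P (⋂ i ∈ S, f i ⁻¹' sets i) := by
    refine measure_congr (Filter.eventuallyEq_set.2 ?_)
    have hall : ∀ᵐ ω ∂P, ∀ i, f i ω = g i ω := ae_all_iff.2 hfg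
    filter_upwards [hall] with ω hω
    simp only [Set.mem_iInter, Set.mem_preimage]
    constructor
    · intro hmem i hi; rw [hω i]; exact hmem i hi
    · intro hmem i hi; rw [← hω i]; exact hmem i hi
  rw [h1, h S hsets]
  exact Finset.prod_congr rfl fun i _ => measure_congr (hae i (sets i))

private theorem gaussian_series_diverges_aux
    {Ω : Type*} [MeasurableSpace Ω] (P : Measure Ω) [IsProbabilityMeasure P]
    (τ : ℕ → ℝ) (hτpos : ∀ k, 0 < τ k)
    (μ ν γ : ℝ) (hν : 0 < ν) (hγ : 0 < γ)
    (U : ℕ → Ω → ℝ) (hUmeas : ∀ k, Measurable (U k))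
    (hindep : iIndepFun U P)
    (hdist : ∀ k, Measure.map (U k) P
      = gaussianReal 0 (Real.toNNReal (γ ^ 2 * (τ k) ^ (2 * μ))))
    (htrace : ¬ Summable fun k => (τ k) ^ (2 * (μ - ν))) :
    P {ω : Ω | Summable fun k => (τ k) ^ (-(2 * ν)) * (U k ω) ^ 2} = 0 := by
  -- basic quantities
  set x : ℕ → Ω → ℝ := fun k ω => (τ k) ^ (-(2 * ν)) * (U k ω) ^ 2 with hx_def
  have hxnonneg : ∀ k ω, 0 ≤ x k ω := fun k ω => by
    have := Real.rpow_pos_of_pos (hτpos k) (-(2 * ν))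
    positivity
  have hxmeas : ∀ k, Measurable (x k) := fun k =>
    measurable_const.mul ((hUmeas k).pow_const 2)
  -- variance and related
  set sk2 : ℕ → ℝ := fun k => γ ^ 2 * (τ k) ^ (2 * μ) with hsk2_def
  have hsk2pos : ∀ k, 0 < sk2 k := fun k => by
    have := Real.rpow_pos_of_pos (hτpos k) (2 * μ); positivity
  set a : ℕ → ℝ := fun k => γ ^ 2 * (τ k) ^ (2 * (μ - ν)) with ha_def
  have hapos : ∀ k, 0 < a k := fun k => by
    have := Real.rpow_pos_of_pos (hτpos k) (2 * (μ - ν)); positivity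
  set b : ℕ → ℝ := fun k => min (a k) 1 with hb_def
  have hbpos : ∀ k, 0 < b k := fun k => lt_min (hapos k) one_pos
  have hble1 : ∀ k, b k ≤ 1 := fun k => min_le_right _ _
  -- key rpow identity : τ^{-(2ν)} * sk2 = a
  have hask2 : ∀ k, (τ k) ^ (-(2 * ν)) * sk2 k = a k := by
    intro k
    have : (τ k) ^ (-(2 * ν)) * (τ k) ^ (2 * μ) = (τ k) ^ (2 * (μ - ν)) := by
      rw [← Real.rpow_add (hτpos k)]
      ring_nf
    simp only [hsk2_def, ha_def]
    calc (τ k) ^ (-(2 * ν)) * (γ ^ 2 * (τ k) ^ (2 * μ))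
        = γ ^ 2 * ((τ k) ^ (-(2 * ν)) * (τ k) ^ (2 * μ)) := by ring
      _ = γ ^ 2 * (τ k) ^ (2 * (μ - ν)) := by rw [this]
  -- the "bad" sets
  set S : ℕ → Set ℝ := fun k => {u : ℝ | sk2 k ≤ u ^ 2} with hS_def
  have hSmeas : ∀ k, MeasurableSet (S k) := fun k =>
    measurableSet_le measurable_const (measurable_id.pow_const 2)
  set A : ℕ → Set Ω := fun k => U k ⁻¹' S k with hA_def
  have hAmeas : ∀ k, MeasurableSet (A k) := fun k => (hUmeas k) (hSmeas k)
  -- probability of bad sets : constant p > 0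
  set p : ENNReal := gaussianReal 0 1 {z : ℝ | 1 ≤ z ^ 2} with hp_def
  have hpne : p ≠ 0 := by
    intro h0
    have hac := gaussianReal_absolutelyContinuous' 0 (one_ne_zero (α := NNReal))
    have hvol : (volume : Measure ℝ) {z : ℝ | 1 ≤ z ^ 2} = 0 := hac h0
    have hsub : Set.Icc (1 : ℝ) 2 ⊆ {z : ℝ | 1 ≤ z ^ 2} := by
      intro z hz
      simp only [Set.mem_setOf_eq]
      nlinarith [hz.1, hz.2]
    have := measure_mono_null hsub hvol
    rw [Real.volume_Icc] at this
    norm_num at this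
  have hPA : ∀ k, P (A k) = p := by
    intro k
    have hc2 : (γ * (τ k) ^ μ) ^ 2 = sk2 k := by
      have h2 : (τ k) ^ (2 * μ) = ((τ k) ^ μ) ^ 2 := by
        rw [mul_comm, Real.rpow_mul (hτpos k).le]
        rw [show ((2 : ℝ) = ((2 : ℕ) : ℝ)) by norm_num, Real.rpow_natCast]
      simp only [hsk2_def, h2]; ring
    set c : ℝ := γ * (τ k) ^ μ with hc_def
    have hcpos : 0 < c := by
      have := Real.rpow_pos_of_pos (hτpos k) μ; positivity
    have hgauss : gaussianReal 0 (Real.toNNReal (γ ^ 2 * (τ k) ^ (2 * μ)))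
        = Measure.map (fun z : ℝ => c * z) (gaussianReal 0 1) := by
      rw [gaussianReal_map_const_mul c]
      congr 1
      · simp
      · apply NNReal.coe_injective
        simp only [NNReal.coe_mul, NNReal.coe_one, mul_one, NNReal.coe_mk]
        rw [Real.coe_toNNReal _ (hsk2pos k).le]
        exact (hc2).symm
    have hpre : (fun z : ℝ => c * z) ⁻¹' S k = {z : ℝ | 1 ≤ z ^ 2} := by
      ext z
      simp only [Set.mem_preimage, hS_def, Set.mem_setOf_eq]
      have h1 : (c * z) ^ 2 = sk2 k * z ^ 2 := by rw [mul_pow, hc2]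
      rw [h1]
      constructor
      · intro h
        nlinarith [hsk2pos k]
      · intro h
        nlinarith [hsk2pos k]
    calc P (A k) = Measure.map (U k) P (S k) :=
          (Measure.map_apply (hUmeas k) (hSmeas k)).symm
      _ = gaussianReal 0 (Real.toNNReal (γ ^ 2 * (τ k) ^ (2 * μ))) (S k) := by rw [hdist k]
      _ = Measure.map (fun z : ℝ => c * z) (gaussianReal 0 1) (S k) := by rw [hgauss]
      _ = gaussianReal 0 1 ((fun z : ℝ => c * z) ⁻¹' S k) :=
          Measure.map_apply (measurable_const_mul c) (hSmeas k)
      _ = p := by rw [hpre]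
  set pr : ℝ := p.toReal with hpr_def
  have hpr_pos : 0 < pr := ENNReal.toReal_pos hpne (by
    have : p ≤ 1 := by
      rw [← hPA 0]; exact prob_le_one
    exact (this.trans_lt ENNReal.one_lt_top).ne)
  -- on A k, x k is at least b k
  have hxA : ∀ k ω, ω ∈ A k → b k ≤ x k ω := by
    intro k ω hω
    have hU2 : sk2 k ≤ (U k ω) ^ 2 := hω
    have h1 : a k ≤ x k ω := by
      rw [← hask2 k]
      exact mul_le_mul_of_nonneg_left hU2
        (Real.rpow_pos_of_pos (hτpos k) _).le
    exact le_trans (min_le_left _ _) h1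
  -- the bounded test functions
  set φ : ℕ → ℝ → ℝ :=
    fun k u => Real.exp (-(min ((τ k) ^ (-(2 * ν)) * u ^ 2) 1)) with hφ_def
  have hφmeas : ∀ k, Measurable (φ k) := by
    intro k
    apply Real.measurable_exp.comp
    exact ((measurable_const.mul (measurable_id.pow_const 2)).min measurable_const).neg
  set g : ℕ → Ω → ℝ := fun k => φ k ∘ U k with hg_def
  have hgmeas : ∀ k, Measurable (g k) := fun k => (hφmeas k).comp (hUmeas k)
  have hg_indep : iIndepFun g P := hindep.comp φ hφmeas
  have hgx : ∀ k ω, g k ω = Real.exp (-(min (x k ω) 1)) := fun k ω => rfl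
  have hgpos : ∀ k ω, 0 < g k ω := fun k ω => Real.exp_pos _
  have hgle1 : ∀ k ω, g k ω ≤ 1 := by
    intro k ω
    rw [hgx]
    rw [Real.exp_le_one_iff]
    have : 0 ≤ min (x k ω) 1 := le_min (hxnonneg k ω) zero_le_one
    linarith
  have hgint : ∀ k, Integrable (g k) P := by
    intro k
    refine (integrable_const (1 : ℝ)).mono' (hgmeas k).aestronglyMeasurable ?_
    exact ae_of_all _ fun ω => by
      rw [Real.norm_eq_abs, abs_of_pos (hgpos k ω)]; exact hgle1 k ω
  set q : ℕ → ℝ := fun k => 1 - Real.exp (-(b k)) with hq_def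
  have hq0 : ∀ k, 0 ≤ q k := by
    intro k
    have : Real.exp (-(b k)) ≤ 1 := by
      rw [Real.exp_le_one_iff]; linarith [hbpos k]
    simp only [hq_def]; linarith
  -- expectation bound
  have hEg_le : ∀ k, ∫ ω, g k ω ∂P ≤ 1 - pr * q k := by
    intro k
    have hpt : ∀ ω, g k ω ≤ 1 - (A k).indicator (fun _ => q k) ω := by
      intro ω
      by_cases hω : ω ∈ A k
      · rw [Set.indicator_of_mem hω]
        have hb : b k ≤ min (x k ω) 1 := le_min (hxA k ω hω) (hble1 k)
        have : g k ω ≤ Real.exp (-(b k)) := by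
          rw [hgx]; exact Real.exp_le_exp.2 (by linarith)
        simp only [hq_def]; linarith
      · rw [Set.indicator_of_notMem hω, sub_zero]; exact hgle1 k ω
    have hint2 : Integrable ((A k).indicator (fun _ => q k)) P :=
      (integrable_const (q k)).indicator (hAmeas k)
    have h1 : ∫ ω, g k ω ∂P ≤ ∫ ω, (1 - (A k).indicator (fun _ => q k) ω) ∂P :=
      integral_mono (hgint k) ((integrable_const 1).sub hint2) hpt
    have h2 : ∫ ω, (1 - (A k).indicator (fun _ => q k) ω) ∂P
        = 1 - pr * q k := by
      rw [integral_sub (integrable_const 1) hint2]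
      rw [integral_const, integral_indicator_const _ (hAmeas k)]
      simp [measureReal_def, hPA k, hpr_def, mul_comm]
    linarith [h1, h2.le, h2.ge]
  have hEg_nonneg : ∀ k, 0 ≤ ∫ ω, g k ω ∂P := fun k =>
    integral_nonneg fun ω => (hgpos k ω).le
  -- product formula by independence
  have hGn_meas : ∀ n : ℕ, Measurable (fun ω => ∏ k ∈ Finset.range n, g k ω) := by
    intro n
    exact Finset.measurable_prod _ fun i _ => hgmeas i
  have hGn_le1 : ∀ n ω, (∏ k ∈ Finset.range n, g k ω) ≤ 1 := fun n ω =>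
    Finset.prod_le_one (fun i _ => (hgpos i ω).le) (fun i _ => hgle1 i ω)
  have hGn_nonneg : ∀ n ω, 0 ≤ ∏ k ∈ Finset.range n, g k ω := fun n ω =>
    Finset.prod_nonneg fun i _ => (hgpos i ω).le
  have hGn_int : ∀ n, Integrable (fun ω => ∏ k ∈ Finset.range n, g k ω) P := by
    intro n
    refine (integrable_const (1 : ℝ)).mono' (hGn_meas n).aestronglyMeasurable ?_
    exact ae_of_all _ fun ω => by
      rw [Real.norm_eq_abs, abs_of_nonneg (hGn_nonneg n ω)]; exact hGn_le1 n ω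
  have hprod : ∀ n, ∫ ω, (∏ k ∈ Finset.range n, g k ω) ∂P
      = ∏ k ∈ Finset.range n, ∫ ω, g k ω ∂P := by
    intro n
    induction n with
    | zero => simp
    | succ n ih =>
      have hip : IndepFun (∏ j ∈ Finset.range n, g j) (g n) P :=
        hg_indep.indepFun_prod_range_succ hgmeas n
      have hint1 : Integrable (∏ j ∈ Finset.range n, g j) P := by
        have : (∏ j ∈ Finset.range n, g j) = fun ω => ∏ j ∈ Finset.range n, g j ω := by
          funext ω; simp [Finset.prod_apply]
        rw [this]; exact hGn_int n
      have hmul := hip.integral_mul_eq_mul_integral hint1.aestronglyMeasurable (hgint n).aestronglyMeasurable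
      have heq1 : (fun ω => (∏ j ∈ Finset.range n, g j) ω * g n ω)
          = fun ω => ∏ k ∈ Finset.range (n + 1), g k ω := by
        funext ω
        simp [Finset.prod_apply, Finset.prod_range_succ]
      have heq2 : ∫ ω, (∏ j ∈ Finset.range n, g j) ω ∂P
          = ∫ ω, (∏ j ∈ Finset.range n, g j ω) ∂P := by
        congr 1; funext ω; simp [Finset.prod_apply]
      calc ∫ ω, (∏ k ∈ Finset.range (n + 1), g k ω) ∂P
          = ∫ ω, (∏ j ∈ Finset.range n, g j) ω * g n ω ∂P := by rw [heq1]
        _ = (∫ ω, (∏ j ∈ Finset.range n, g j) ω ∂P) * ∫ ω, g n ω ∂P := hmul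
        _ = (∏ k ∈ Finset.range n, ∫ ω, g k ω ∂P) * ∫ ω, g n ω ∂P := by
            rw [heq2, ih]
        _ = ∏ k ∈ Finset.range (n + 1), ∫ ω, g k ω ∂P := by
            rw [Finset.prod_range_succ]
  -- divergence of Σ q
  have hqns : ¬ Summable q := by
    intro hs
    have hble : ∀ k, b k ≤ 2 * q k := by
      intro k
      have := exp_neg_le_one_sub_half (hbpos k).le (hble1 k)
      simp only [hq_def]; linarith
    have hbsum : Summable b :=
      Summable.of_nonneg_of_le (fun k => (hbpos k).le) hble (hs.mul_left 2)
    have hb0 : Tendsto b atTop (nhds 0) := hbsum.tendsto_atTop_zero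
    have hev : ∀ᶠ k in atTop, b k = a k := by
      filter_upwards [hb0.eventually_lt_const (by norm_num : (0:ℝ) < 1)] with k hk
      simp only [hb_def] at hk ⊢
      rcases le_or_gt (a k) 1 with h | h
      · exact min_eq_left h
      · exfalso; rw [min_eq_right h.le] at hk; exact absurd hk (lt_irrefl 1)
    obtain ⟨N, hN⟩ := eventually_atTop.1 hev
    have h1 : Summable fun k => b (k + N) := (summable_nat_add_iff N).2 hbsum
    have h2 : Summable fun k => a (k + N) := by
      refine h1.congr fun k => ?_
      exact hN (k + N) (Nat.le_add_left N k)
    have h3 : Summable a := (summable_nat_add_iff N).1 h2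
    have h4 : Summable fun k => (τ k) ^ (2 * (μ - ν)) := by
      have := h3.mul_left ((γ ^ 2)⁻¹)
      refine this.congr fun k => ?_
      simp only [ha_def]
      field_simp
    exact htrace h4
  have hSq : Tendsto (fun n => ∑ k ∈ Finset.range n, q k) atTop atTop :=
    (not_summable_iff_tendsto_nat_atTop_of_nonneg hq0).1 hqns
  -- integral of products tends to 0
  have hub : ∀ n, ∫ ω, (∏ k ∈ Finset.range n, g k ω) ∂P
      ≤ Real.exp (-(pr * ∑ k ∈ Finset.range n, q k)) := by
    intro n
    rw [hprod n]
    have h1 : ∏ k ∈ Finset.range n, ∫ ω, g k ω ∂P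
        ≤ ∏ k ∈ Finset.range n, Real.exp (-(pr * q k)) := by
      refine Finset.prod_le_prod (fun k _ => hEg_nonneg k) fun k _ => ?_
      have h2 : 1 - pr * q k ≤ Real.exp (-(pr * q k)) := by
        have := Real.add_one_le_exp (-(pr * q k)); linarith
      exact (hEg_le k).trans h2
    have h3 : ∏ k ∈ Finset.range n, Real.exp (-(pr * q k))
        = Real.exp (-(pr * ∑ k ∈ Finset.range n, q k)) := by
      rw [← Real.exp_sum]
      congr 1
      rw [Finset.sum_neg_distrib, neg_inj, Finset.mul_sum]
    rw [← h3]; exact h1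
  have hlim : Tendsto (fun n => ∫ ω, (∏ k ∈ Finset.range n, g k ω) ∂P)
      atTop (nhds 0) := by
    have hup : Tendsto (fun n => Real.exp (-(pr * ∑ k ∈ Finset.range n, q k)))
        atTop (nhds 0) := by
      apply Real.tendsto_exp_atBot.comp
      apply Filter.tendsto_neg_atTop_atBot.comp
      exact hSq.const_mul_atTop hpr_pos
    refine squeeze_zero (fun n => ?_) hub hup
    exact integral_nonneg fun ω => hGn_nonneg n ω
  -- the sets where partial sums stay bounded
  set B : ℕ → Set Ω := fun M => ⋂ n, {ω | ∑ k ∈ Finset.range n, x k ω ≤ (M : ℝ)}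
    with hB_def
  have hBmeas : ∀ M, MeasurableSet (B M) := by
    intro M
    refine MeasurableSet.iInter fun n => ?_
    exact measurableSet_le (Finset.measurable_sum _ fun k _ => hxmeas k) measurable_const
  have hB0 : ∀ M, P (B M) = 0 := by
    intro M
    by_contra hne
    have hBlb : ∀ n, Real.exp (-(M : ℝ)) * (P (B M)).toReal
        ≤ ∫ ω, (∏ k ∈ Finset.range n, g k ω) ∂P := by
      intro n
      have hpt : ∀ ω, (B M).indicator (fun _ => Real.exp (-(M : ℝ))) ω
          ≤ ∏ k ∈ Finset.range n, g k ω := by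
        intro ω
        by_cases hω : ω ∈ B M
        · rw [Set.indicator_of_mem hω]
          have hsum : ∑ k ∈ Finset.range n, x k ω ≤ (M : ℝ) := by
            have := Set.mem_iInter.1 hω n; exact this
          have hy : ∑ k ∈ Finset.range n, min (x k ω) 1
              ≤ ∑ k ∈ Finset.range n, x k ω :=
            Finset.sum_le_sum fun k _ => min_le_left _ _
          have hGeq : ∏ k ∈ Finset.range n, g k ω
              = Real.exp (-(∑ k ∈ Finset.range n, min (x k ω) 1)) := by
            simp only [hgx]
            rw [← Real.exp_sum]
            congr 1
            rw [Finset.sum_neg_distrib]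
          rw [hGeq]
          exact Real.exp_le_exp.2 (by linarith)
        · rw [Set.indicator_of_notMem hω]; exact hGn_nonneg n ω
      have hint : Integrable ((B M).indicator (fun _ => Real.exp (-(M : ℝ)))) P :=
        (integrable_const _).indicator (hBmeas M)
      have := integral_mono hint (hGn_int n) hpt
      rwa [integral_indicator_const _ (hBmeas M), measureReal_def, smul_eq_mul, mul_comm] at this
    have hle : Real.exp (-(M : ℝ)) * (P (B M)).toReal ≤ 0 :=
      ge_of_tendsto hlim (Eventually.of_forall hBlb)
    have hpos : 0 < Real.exp (-(M : ℝ)) * (P (B M)).toReal := by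
      apply mul_pos (Real.exp_pos _)
      exact ENNReal.toReal_pos hne (measure_ne_top P _)
    linarith
  -- conclude
  refine measure_mono_null ?_ (measure_iUnion_null hB0)
  intro ω hω
  have hsum : Summable fun k => x k ω := hω
  set t : ℝ := ∑' k, x k ω with ht_def
  refine Set.mem_iUnion.2 ⟨⌈t⌉₊, Set.mem_iInter.2 fun n => ?_⟩
  have h1 : ∑ k ∈ Finset.range n, x k ω ≤ t :=
    Summable.sum_le_tsum (Finset.range n) (fun k _ => hxnonneg k ω) hsum
  exact h1.trans (Nat.le_ceil t)

/-- Let `(τ_k)` be positive reals with `Σ τ_k² < ∞`, `μ ≥ 1`, `ν > 0`, `γ > 0`, and let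
`(U_k)` be independent random variables with `U_k ~ N(0, γ²τ_k^{2μ})`.  If
`Σ_k τ_k^{2(μ−ν)} = ∞`, then the event that `Σ_k τ_k^{−2ν} U_k²` converges (to a finite
value) has probability zero. -/
theorem gaussian_series_diverges_of_not_trace_class
    {Ω : Type*} [MeasurableSpace Ω] (P : Measure Ω) [IsProbabilityMeasure P]
    (τ : ℕ → ℝ) (hτpos : ∀ k, 0 < τ k) (hτ2 : Summable fun k => (τ k) ^ 2)
    (μ ν γ : ℝ) (hμ : 1 ≤ μ) (hν : 0 < ν) (hγ : 0 < γ)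
    (U : ℕ → Ω → ℝ)
    (hindep : iIndepFun U P)
    (hdist : ∀ k, Measure.map (U k) P
      = gaussianReal 0 (Real.toNNReal (γ ^ 2 * (τ k) ^ (2 * μ))))
    (htrace : ¬ Summable fun k => (τ k) ^ (2 * (μ - ν))) :
    P {ω : Ω | Summable fun k => (τ k) ^ (-(2 * ν)) * (U k ω) ^ 2} = 0 := by
  -- replace U by a measurable modification
  have hUae : ∀ k, AEMeasurable (U k) P := by
    intro k
    apply aemeasurable_of_map_neZero
    rw [hdist k]
    exact ⟨IsProbabilityMeasure.ne_zero (gaussianReal 0 (Real.toNNReal (γ ^ 2 * (τ k) ^ (2 * μ))))⟩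
  set V : ℕ → Ω → ℝ := fun k => (hUae k).mk (U k) with hV_def
  have hVmeas : ∀ k, Measurable (V k) := fun k => (hUae k).measurable_mk
  have hUV : ∀ k, U k =ᵐ[P] V k := fun k => (hUae k).ae_eq_mk
  have hdistV : ∀ k, Measure.map (V k) P
      = gaussianReal 0 (Real.toNNReal (γ ^ 2 * (τ k) ^ (2 * μ))) := by
    intro k
    rw [← Measure.map_congr (hUV k)]
    exact hdist k
  have hindepV : iIndepFun V P :=
    iIndepFun_ae_congr hindep hUV
  have hmain := gaussian_series_diverges_aux P τ hτpos μ ν γ hν hγ V hVmeas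
    hindepV hdistV htrace
  rw [← hmain]
  apply measure_congr
  refine Filter.eventuallyEq_set.2 ?_
  have : ∀ᵐ ω ∂P, ∀ k, U k ω = V k ω := ae_all_iff.2 hUV
  filter_upwards [this] with ω hω
  constructor
  · intro h; exact h.congr fun k => by rw [hω k]
  · intro h; exact h.congr fun k => by rw [hω k]
end

section
/- Let ν > 0, μ ≥ 1 with μ > ν/2 − 1, σ > 0, γ₀ > 0, and set γ := γ₀σ and C₀ := γ²(T*T)^μ. Then ‖(T*T)^{ν/2}(T*Φ_MAP − φ)‖_X ≤ γ₀^{−ν/(μ+1)}‖φ‖_X. -/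
open scoped RealInnerProductSpace


private lemma dyadic_bound (h : ℝ → ℝ) {b : ℝ} (hbpos : 0 < b)
    (hmid : ∀ s t : ℝ, 0 ≤ s → s ≤ b → 0 ≤ t → t ≤ b → 2 * h ((s + t) / 2) ≤ h s + h t) :
    ∀ n : ℕ, ∀ k : ℕ, k ≤ 2 ^ n →
      h ((k : ℝ) * b / 2 ^ n) ≤ (1 - (k : ℝ) / 2 ^ n) * h 0 + ((k : ℝ) / 2 ^ n) * h b := by
  intro n
  induction n with
  | zero =>
    intro k hk
    interval_cases k <;> norm_num
  | succ n ih =>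
    intro k hk
    have h2 : (2 : ℕ) ^ (n + 1) = 2 * 2 ^ n := by ring
    rcases Nat.even_or_odd k with ⟨j, hj⟩ | ⟨j, hj⟩
    · subst hj
      have hj2 : j ≤ 2 ^ n := by omega
      have e1 : ((j + j : ℕ) : ℝ) * b / 2 ^ (n + 1) = (j : ℝ) * b / 2 ^ n := by
        push_cast; ring
      have e2 : ((j + j : ℕ) : ℝ) / 2 ^ (n + 1) = (j : ℝ) / 2 ^ n := by
        push_cast; ring
      rw [e1, e2]
      exact ih j hj2
    · subst hj
      have hj2 : j + 1 ≤ 2 ^ n := by omega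
      have hj1 : j ≤ 2 ^ n := by omega
      have hpn : (0 : ℝ) < 2 ^ n := by positivity
      have hsle : (j : ℝ) * b / 2 ^ n ≤ b := by
        rw [div_le_iff₀ hpn]
        have : (j : ℝ) ≤ 2 ^ n := by exact_mod_cast hj1
        nlinarith
      have htle : ((j : ℝ) + 1) * b / 2 ^ n ≤ b := by
        rw [div_le_iff₀ hpn]
        have : (j : ℝ) + 1 ≤ 2 ^ n := by exact_mod_cast hj2
        nlinarith
      have hs0 : (0 : ℝ) ≤ (j : ℝ) * b / 2 ^ n := by positivity
      have ht0 : (0 : ℝ) ≤ ((j : ℝ) + 1) * b / 2 ^ n := by positivity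
      have hm := hmid _ _ hs0 hsle ht0 htle
      have ihj := ih j hj1
      have ihj1 := ih (j + 1) hj2
      have e1 : ((2 * j + 1 : ℕ) : ℝ) * b / 2 ^ (n + 1)
          = ((j : ℝ) * b / 2 ^ n + ((j : ℝ) + 1) * b / 2 ^ n) / 2 := by
        push_cast; ring
      have e2 : (1 - ((2 * j + 1 : ℕ) : ℝ) / 2 ^ (n + 1)) * h 0
            + (((2 * j + 1 : ℕ) : ℝ) / 2 ^ (n + 1)) * h b
          = (((1 - (j : ℝ) / 2 ^ n) * h 0 + ((j : ℝ) / 2 ^ n) * h b)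
            + ((1 - ((j + 1 : ℕ) : ℝ) / 2 ^ n) * h 0 + (((j + 1 : ℕ) : ℝ) / 2 ^ n) * h b)) / 2 := by
        push_cast; ring
      rw [e1, e2]
      have : ((j + 1 : ℕ) : ℝ) * b / 2 ^ n = ((j : ℝ) + 1) * b / 2 ^ n := by push_cast; ring
      rw [this] at ihj1
      linarith

private lemma moment_bound (g : ℝ → ℝ) (hg : ∀ s, 0 ≤ g s)
    (hmid : ∀ s t : ℝ, 0 ≤ s → 0 ≤ t → g ((s + t) / 2) ^ 2 ≤ g s * g t)
    (hcont : ContinuousOn g (Set.Ioi 0))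
    {a b : ℝ} (ha : 0 < a) (hab : a < b) :
    g a ≤ g b ^ (a / b) * g 0 ^ (1 - a / b) := by
  have hb : 0 < b := ha.trans hab
  have hRHS : 0 ≤ g b ^ (a / b) * g 0 ^ (1 - a / b) :=
    mul_nonneg (Real.rpow_nonneg (hg b) _) (Real.rpow_nonneg (hg 0) _)
  by_cases h0 : g 0 = 0
  · have h1 := hmid 0 (2 * a) le_rfl (by linarith)
    have e : (0 + 2 * a) / 2 = a := by ring
    rw [e, h0, zero_mul] at h1
    have : g a = 0 := by nlinarith [hg a]
    rw [this]; exact hRHS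
  by_cases hb0 : g b = 0
  · -- zeros propagate down dyadically
    have hz : ∀ n : ℕ, g (b / 2 ^ n) = 0 := by
      intro n
      induction n with
      | zero => simpa using hb0
      | succ n ihn =>
        have h1 := hmid 0 (b / 2 ^ n) le_rfl (by positivity)
        have e : (0 + b / 2 ^ n) / 2 = b / 2 ^ (n + 1) := by ring
        rw [e, ihn, mul_zero] at h1
        nlinarith [hg (b / 2 ^ (n + 1))]
    obtain ⟨n, hn⟩ := pow_unbounded_of_one_lt (b / a) (one_lt_two (α := ℝ))
    have hpn : (0 : ℝ) < 2 ^ n := by positivity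
    have hlt : b / 2 ^ n < a := by
      rw [div_lt_iff₀ hpn]
      rw [div_lt_iff₀ ha] at hn
      linarith
    have ht0 : (0 : ℝ) ≤ 2 * a - b / 2 ^ n := by linarith
    have h1 := hmid (b / 2 ^ n) (2 * a - b / 2 ^ n) (by positivity) ht0
    have e : (b / 2 ^ n + (2 * a - b / 2 ^ n)) / 2 = a := by ring
    rw [e, hz n, zero_mul] at h1
    have : g a = 0 := by nlinarith [hg a]
    rw [this]; exact hRHS
  -- main case
  have hg0 : 0 < g 0 := lt_of_le_of_ne (hg 0) (Ne.symm h0)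
  have hgb : 0 < g b := lt_of_le_of_ne (hg b) (Ne.symm hb0)
  have hpos : ∀ s : ℝ, 0 ≤ s → s ≤ b → 0 < g s := by
    intro s hs0 hsb
    rcases lt_or_eq_of_le (hg s) with h | h
    · exact h
    · exfalso
      have h1 := hmid s (2 * b - s) hs0 (by linarith)
      have e : (s + (2 * b - s)) / 2 = b := by ring
      rw [e, ← h, zero_mul] at h1
      nlinarith
  set h : ℝ → ℝ := fun s => Real.log (g s) with hh
  have hmidlog : ∀ s t : ℝ, 0 ≤ s → s ≤ b → 0 ≤ t → t ≤ b →
      2 * h ((s + t) / 2) ≤ h s + h t := by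
    intro s t hs0 hsb ht0 htb
    have hm0 : 0 ≤ (s + t) / 2 := by linarith
    have hmb : (s + t) / 2 ≤ b := by linarith
    have hgm := hpos _ hm0 hmb
    have hgs := hpos _ hs0 hsb
    have hgt := hpos _ ht0 htb
    have h1 := hmid s t hs0 ht0
    have h2 : Real.log (g ((s + t) / 2) ^ 2) ≤ Real.log (g s * g t) :=
      Real.log_le_log (by positivity) h1
    rw [Real.log_pow, Real.log_mul (ne_of_gt hgs) (ne_of_gt hgt)] at h2
    simpa [hh] using h2
  have hd := dyadic_bound h hb hmidlog
  -- limit along dyadic approximations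
  set k : ℕ → ℕ := fun n => ⌊a * 2 ^ n / b⌋₊ with hk
  have hkle : ∀ n, k n ≤ 2 ^ n := by
    intro n
    have : a * 2 ^ n / b ≤ ((2 ^ n : ℕ) : ℝ) := by
      rw [div_le_iff₀ hb]
      push_cast
      nlinarith [pow_pos (two_pos (α := ℝ)) n]
    calc k n ≤ ⌊((2 ^ n : ℕ) : ℝ)⌋₊ := Nat.floor_le_floor this
      _ = 2 ^ n := Nat.floor_natCast _
  have hq : Filter.Tendsto (fun n : ℕ => (k n : ℝ) / 2 ^ n) Filter.atTop (nhds (a / b)) := by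
    have hlow : ∀ n : ℕ, a / b - 1 / 2 ^ n ≤ (k n : ℝ) / 2 ^ n := by
      intro n
      have hpn : (0 : ℝ) < 2 ^ n := by positivity
      have := Nat.sub_one_lt_floor (a * 2 ^ n / b)
      have h3 : a / b * 2 ^ n - 1 ≤ (k n : ℝ) := by
        rw [hk]
        have : a * 2 ^ n / b = a / b * 2 ^ n := by ring
        nlinarith [Nat.sub_one_lt_floor (a * 2 ^ n / b)]
      rw [sub_div' (ne_of_gt hpn), div_le_div_iff₀ hpn hpn]
      nlinarith
    have hhigh : ∀ n : ℕ, (k n : ℝ) / 2 ^ n ≤ a / b := by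
      intro n
      have hpn : (0 : ℝ) < 2 ^ n := by positivity
      have h4 : (k n : ℝ) ≤ a * 2 ^ n / b := Nat.floor_le (by positivity)
      rw [div_le_div_iff₀ hpn hb]
      rw [le_div_iff₀ hb] at h4
      nlinarith
    have h5 : Filter.Tendsto (fun n : ℕ => a / b - 1 / 2 ^ n) Filter.atTop (nhds (a / b)) := by
      have : Filter.Tendsto (fun n : ℕ => (1 : ℝ) / 2 ^ n) Filter.atTop (nhds 0) := by
        simpa [one_div, inv_pow] using
          tendsto_pow_atTop_nhds_zero_of_lt_one (by norm_num : (0:ℝ) ≤ 2⁻¹) (by norm_num)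
      simpa using (tendsto_const_nhds (x := a / b) (f := Filter.atTop)).sub this
    exact tendsto_of_tendsto_of_tendsto_of_le_of_le h5 tendsto_const_nhds hlow hhigh
  have hs : Filter.Tendsto (fun n : ℕ => (k n : ℝ) * b / 2 ^ n) Filter.atTop (nhds a) := by
    have := hq.mul_const b
    rw [div_mul_cancel₀ _ (ne_of_gt hb)] at this
    simpa [mul_div_assoc, mul_comm, mul_left_comm, div_mul_eq_mul_div] using this
  have hga : 0 < g a := hpos a ha.le hab.le
  have hca : ContinuousAt g a := hcont.continuousAt (Ioi_mem_nhds ha)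
  have hha : Filter.Tendsto (fun n : ℕ => h ((k n : ℝ) * b / 2 ^ n)) Filter.atTop (nhds (h a)) := by
    have : ContinuousAt (fun s => Real.log (g s)) a :=
      (Real.continuousAt_log (ne_of_gt hga)).comp hca
    exact this.tendsto.comp hs
  have hcn : Filter.Tendsto
      (fun n : ℕ => (1 - (k n : ℝ) / 2 ^ n) * h 0 + ((k n : ℝ) / 2 ^ n) * h b)
      Filter.atTop (nhds ((1 - a / b) * h 0 + (a / b) * h b)) :=
    (((tendsto_const_nhds.sub hq).mul tendsto_const_nhds).add (hq.mul tendsto_const_nhds))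
  have hfinal : h a ≤ (1 - a / b) * h 0 + (a / b) * h b :=
    le_of_tendsto_of_tendsto' hha hcn (fun n => hd n (k n) (hkle n))
  -- exponentiate
  have := Real.exp_le_exp.mpr hfinal
  rw [hh] at this
  simp only at this
  rw [Real.exp_log hga] at this
  calc g a ≤ Real.exp ((1 - a / b) * Real.log (g 0) + a / b * Real.log (g b)) := this
    _ = g b ^ (a / b) * g 0 ^ (1 - a / b) := by
        rw [Real.exp_add, Real.rpow_def_of_pos hgb, Real.rpow_def_of_pos hg0]
        ring_nf

set_option maxHeartbeats 1000000 in
/-- Let `ν > 0`, `μ ≥ 1` with `μ > ν/2 − 1`, `σ > 0`, `γ₀ > 0`, `γ = γ₀σ`, and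
`C₀ = γ²(T*T)^μ`.  Then `‖(T*T)^{ν/2}(T*Φ_MAP − φ)‖ ≤ γ₀^{−ν/(μ+1)}‖φ‖`, where
`Φ_MAP = T C₀^{1/2}(C₀^{1/2}T*TC₀^{1/2} + σ²Id)⁻¹ C₀^{1/2}φ`.  The operator power
`(T*T)^s` is encoded by the family `pow`, uniquely determined by the hypotheses below;
the positive square root of `C₀ = γ² (T*T)^μ` is `S := γ • (T*T)^{μ/2}`, and `B` denotes
the inverse `(C₀^{1/2}T*TC₀^{1/2} + σ²Id)⁻¹`. -/
theorem residual_estimate_a_priori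
    {X Y : Type*}
    [NormedAddCommGroup X] [InnerProductSpace ℝ X] [CompleteSpace X]
    [TopologicalSpace.SeparableSpace X]
    [NormedAddCommGroup Y] [InnerProductSpace ℝ Y] [CompleteSpace Y]
    [TopologicalSpace.SeparableSpace Y]
    (T : X →L[ℝ] Y) (φ : X)
    (ν μ σ γ₀ γ : ℝ) (hν : 0 < ν) (hμ : 1 ≤ μ) (hμν : ν / 2 - 1 < μ)
    (hσ : 0 < σ) (hγ₀ : 0 < γ₀) (hγ : γ = γ₀ * σ)
    -- `pow s` is the operator power `(T*T)^s`, characterized by: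
    (pow : ℝ → (X →L[ℝ] X))
    (hpow0 : pow 0 = 1)
    (hpow1 : pow 1 = (ContinuousLinearMap.adjoint T) ∘L T)
    (hpowsa : ∀ s : ℝ, 0 < s → IsSelfAdjoint (pow s))
    (hpowpos : ∀ s : ℝ, 0 < s → ∀ x : X, 0 ≤ ⟪(pow s) x, x⟫)
    (hpowadd : ∀ s t : ℝ, 0 < s → 0 < t → pow (s + t) = pow s ∘L pow t)
    (hpowcont : ContinuousOn pow (Set.Ioi (0 : ℝ)))
    -- `S = γ • (T*T)^{μ/2}` is the positive square root of `C₀ = γ² (T*T)^μ`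
    (S : X →L[ℝ] X) (hSdef : S = γ • pow (μ / 2))
    -- `B` is the inverse of `C₀^{1/2} T* T C₀^{1/2} + σ² Id`
    (B : X →L[ℝ] X)
    (hB : B ∘L (S ∘L (ContinuousLinearMap.adjoint T) ∘L T ∘L S + σ ^ 2 • 1) = 1)
    (hB' : (S ∘L (ContinuousLinearMap.adjoint T) ∘L T ∘L S + σ ^ 2 • 1) ∘L B = 1) :
    ‖(pow (ν / 2)) ((ContinuousLinearMap.adjoint T) (T (S (B (S φ)))) - φ)‖
      ≤ γ₀ ^ (-ν / (μ + 1)) * ‖φ‖ := by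
  have hμ2 : 0 < μ / 2 := by linarith
  have hb1 : (0 : ℝ) < μ + 1 := by linarith
  have ha1 : (0 : ℝ) < ν / 2 := by linarith
  have hab : ν / 2 < μ + 1 := by linarith
  have hγpos : 0 < γ := by rw [hγ]; positivity
  -- pointwise versions of the hypotheses
  have haddv : ∀ s t : ℝ, 0 < s → 0 < t → ∀ x : X, pow s (pow t x) = pow (s + t) x := by
    intro s t hs ht x
    rw [hpowadd s t hs ht]; rfl
  have h1v : ∀ y : X, (ContinuousLinearMap.adjoint T) (T y) = pow 1 y := by
    intro y; rw [hpow1]; rfl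
  have hsym : ∀ s : ℝ, 0 < s → ∀ x y : X, ⟪pow s x, y⟫ = ⟪x, pow s y⟫ := by
    intro s hs x y
    exact ((ContinuousLinearMap.isSelfAdjoint_iff_isSymmetric).mp (hpowsa s hs)) x y
  have h0v : ∀ x : X, pow 0 x = x := by intro x; rw [hpow0]; rfl
  -- the operator M and its pointwise representation
  set opM : X →L[ℝ] X :=
    S ∘L (ContinuousLinearMap.adjoint T) ∘L T ∘L S + σ ^ 2 • 1 with hopM
  have hMrep : ∀ z : X, opM z = γ ^ 2 • pow (μ + 1) z + σ ^ 2 • z := by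
    intro z
    have e1 : opM z = S ((ContinuousLinearMap.adjoint T) (T (S z))) + σ ^ 2 • z := rfl
    rw [e1, hSdef]
    simp only [ContinuousLinearMap.smul_apply, map_smul, h1v]
    rw [haddv 1 (μ / 2) one_pos hμ2, haddv (μ / 2) (1 + μ / 2) hμ2 (by linarith)]
    have e2 : μ / 2 + (1 + μ / 2) = μ + 1 := by ring
    rw [e2, smul_smul, ← pow_two γ]
  have hBM : ∀ w : X, B (opM w) = w := by
    intro w
    have := ContinuousLinearMap.ext_iff.mp hB w
    simpa using this
  have hMB : ∀ w : X, opM (B w) = w := by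
    intro w
    have := ContinuousLinearMap.ext_iff.mp hB' w
    simpa using this
  -- B commutes with the powers
  have hcommB : ∀ s : ℝ, 0 < s → ∀ z : X, B (pow s z) = pow s (B z) := by
    intro s hs z
    have hMP : ∀ w : X, opM (pow s w) = pow s (opM w) := by
      intro w
      rw [hMrep, hMrep, map_add, map_smul, map_smul,
          haddv (μ + 1) s (by linarith) hs, haddv s (μ + 1) hs (by linarith), add_comm s]
    conv_lhs => rw [← hMB z]
    rw [← hMP (B z), hBM]
  set ψ : X := B φ with hψ
  -- the residual is -σ² ψ
  have claim1 : (ContinuousLinearMap.adjoint T) (T (S (B (S φ)))) = γ ^ 2 • pow (μ + 1) ψ := by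
    rw [hSdef]
    simp only [ContinuousLinearMap.smul_apply, map_smul, h1v]
    rw [hcommB (μ / 2) hμ2 φ]
    rw [haddv (μ / 2) (μ / 2) hμ2 hμ2, haddv 1 (μ / 2 + μ / 2) one_pos (by linarith)]
    have e2 : 1 + (μ / 2 + μ / 2) = μ + 1 := by ring
    rw [e2, smul_smul]
    congr 1
    ring
  have claim2 : φ = γ ^ 2 • pow (μ + 1) ψ + σ ^ 2 • ψ := by
    conv_lhs => rw [← hMB φ]
    rw [hMrep]
  have hres : (ContinuousLinearMap.adjoint T) (T (S (B (S φ)))) - φ = -(σ ^ 2 • ψ) := by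
    rw [claim1]
    conv_lhs => rw [claim2]
    abel
  rw [hres, map_neg, map_smul, norm_neg, norm_smul]
  have habs : ‖(σ ^ 2 : ℝ)‖ = σ ^ 2 := by
    rw [Real.norm_eq_abs, abs_of_pos (by positivity)]
  rw [habs]
  -- midpoint inequality for g s = ‖pow s ψ‖
  have hkey : ∀ s t : ℝ, 0 < s → 0 < t →
      ‖pow ((s + t) / 2) ψ‖ ^ 2 ≤ ‖pow s ψ‖ * ‖pow t ψ‖ := by
    intro s t hs ht
    have hm : 0 < (s + t) / 2 := by linarith
    have e1 : ‖pow ((s + t) / 2) ψ‖ ^ 2 = ⟪pow ((s + t) / 2) ψ, pow ((s + t) / 2) ψ⟫ :=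
      (real_inner_self_eq_norm_sq _).symm
    rw [e1, hsym _ hm, haddv _ _ hm hm]
    have e2 : (s + t) / 2 + (s + t) / 2 = s + t := by ring
    rw [e2, ← haddv s t hs ht, ← hsym s hs]
    exact real_inner_le_norm _ _
  have hkey0 : ∀ t : ℝ, 0 < t → ‖pow (t / 2) ψ‖ ^ 2 ≤ ‖ψ‖ * ‖pow t ψ‖ := by
    intro t ht
    have hm : 0 < t / 2 := by linarith
    have e1 : ‖pow (t / 2) ψ‖ ^ 2 = ⟪pow (t / 2) ψ, pow (t / 2) ψ⟫ :=
      (real_inner_self_eq_norm_sq _).symm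
    rw [e1, hsym _ hm, haddv _ _ hm hm]
    have e2 : t / 2 + t / 2 = t := by ring
    rw [e2]
    exact real_inner_le_norm _ _
  have hmid : ∀ s t : ℝ, 0 ≤ s → 0 ≤ t →
      ‖pow ((s + t) / 2) ψ‖ ^ 2 ≤ ‖pow s ψ‖ * ‖pow t ψ‖ := by
    intro s t hs ht
    rcases hs.lt_or_eq with hs' | hs'
    · rcases ht.lt_or_eq with ht' | ht'
      · exact hkey s t hs' ht'
      · rw [← ht']
        have e : (s + 0) / 2 = s / 2 := by ring
        rw [e]
        calc ‖pow (s / 2) ψ‖ ^ 2 ≤ ‖ψ‖ * ‖pow s ψ‖ := hkey0 s hs'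
          _ = ‖pow s ψ‖ * ‖pow 0 ψ‖ := by rw [h0v ψ]; ring
    · rcases ht.lt_or_eq with ht' | ht'
      · rw [← hs']
        have e : (0 + t) / 2 = t / 2 := by ring
        rw [e]
        calc ‖pow (t / 2) ψ‖ ^ 2 ≤ ‖ψ‖ * ‖pow t ψ‖ := hkey0 t ht'
          _ = ‖pow 0 ψ‖ * ‖pow t ψ‖ := by rw [h0v ψ]
      · rw [← hs', ← ht']
        have e : ((0 : ℝ) + 0) / 2 = 0 := by ring
        rw [e, pow_two]
  have hgcont : ContinuousOn (fun s : ℝ => ‖pow s ψ‖) (Set.Ioi 0) := by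
    have hc : Continuous (fun f : X →L[ℝ] X => f ψ) :=
      (ContinuousLinearMap.apply ℝ X ψ).continuous
    exact (hc.comp_continuousOn hpowcont).norm
  have hmom := moment_bound (fun s => ‖pow s ψ‖) (fun s => norm_nonneg _)
    hmid hgcont ha1 hab
  simp only [h0v ψ] at hmom
  set θ : ℝ := ν / 2 / (μ + 1) with hθdef
  have hθpos : 0 < θ := by rw [hθdef]; positivity
  have hθlt : θ < 1 := by
    rw [hθdef, div_lt_one hb1]; linarith
  -- norm bounds on the decomposition of φ
  have hinner : (0 : ℝ) ≤ ⟪(γ ^ 2 • (pow (μ + 1)) ψ), ((σ ^ 2 : ℝ) • ψ)⟫ := by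
    rw [real_inner_smul_left, real_inner_smul_right]
    exact mul_nonneg (by positivity)
      (mul_nonneg (by positivity) (hpowpos (μ + 1) (by linarith) ψ))
  have hnsq : ‖φ‖ ^ 2 = ‖γ ^ 2 • (pow (μ + 1)) ψ‖ ^ 2
      + 2 * ⟪γ ^ 2 • (pow (μ + 1)) ψ, (σ ^ 2 : ℝ) • ψ⟫ + ‖(σ ^ 2 : ℝ) • ψ‖ ^ 2 := by
    conv_lhs => rw [claim2]
    exact norm_add_sq_real _ _
  have eU : ‖γ ^ 2 • (pow (μ + 1)) ψ‖ = γ ^ 2 * ‖(pow (μ + 1)) ψ‖ := by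
    rw [norm_smul, Real.norm_eq_abs, abs_of_pos (by positivity)]
  have eV : ‖(σ ^ 2 : ℝ) • ψ‖ = σ ^ 2 * ‖ψ‖ := by
    rw [norm_smul, Real.norm_eq_abs, abs_of_pos (by positivity)]
  rw [eU, eV] at hnsq
  have hub : γ ^ 2 * ‖(pow (μ + 1)) ψ‖ ≤ ‖φ‖ := by
    have h1 : (γ ^ 2 * ‖(pow (μ + 1)) ψ‖) ^ 2 ≤ ‖φ‖ ^ 2 := by
      linarith [hinner, sq_nonneg (σ ^ 2 * ‖ψ‖)]
    have h2 := Real.sqrt_le_sqrt h1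
    rwa [Real.sqrt_sq (by positivity), Real.sqrt_sq (norm_nonneg _)] at h2
  have hvb : σ ^ 2 * ‖ψ‖ ≤ ‖φ‖ := by
    have h1 : (σ ^ 2 * ‖ψ‖) ^ 2 ≤ ‖φ‖ ^ 2 := by
      linarith [hinner, sq_nonneg (γ ^ 2 * ‖(pow (μ + 1)) ψ‖)]
    have h2 := Real.sqrt_le_sqrt h1
    rwa [Real.sqrt_sq (by positivity), Real.sqrt_sq (norm_nonneg _)] at h2
  have hgb_le : ‖(pow (μ + 1)) ψ‖ ≤ ‖φ‖ / γ ^ 2 := by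
    rw [le_div_iff₀ (by positivity)]
    linarith [hub]
  have hg0_le : ‖ψ‖ ≤ ‖φ‖ / σ ^ 2 := by
    rw [le_div_iff₀ (by positivity)]
    linarith [hvb]
  have hstep : ‖pow (ν / 2) ψ‖ ≤ (‖φ‖ / γ ^ 2) ^ θ * (‖φ‖ / σ ^ 2) ^ (1 - θ) :=
    hmom.trans (mul_le_mul
      (Real.rpow_le_rpow (norm_nonneg _) hgb_le hθpos.le)
      (Real.rpow_le_rpow (norm_nonneg _) hg0_le (by linarith))
      (Real.rpow_nonneg (norm_nonneg _) _)
      (Real.rpow_nonneg (by positivity) _))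
  have ec : ‖φ‖ ^ θ * ‖φ‖ ^ (1 - θ) = ‖φ‖ := by
    rw [← Real.rpow_add' (norm_nonneg φ) (by simp)]
    have e : θ + (1 - θ) = 1 := by ring
    rw [e, Real.rpow_one]
  have eD : (γ ^ 2) ^ θ * (σ ^ 2) ^ (1 - θ) = γ₀ ^ (ν / (μ + 1)) * σ ^ 2 := by
    have e1 : γ ^ 2 = γ₀ ^ 2 * σ ^ 2 := by rw [hγ]; ring
    rw [e1, Real.mul_rpow (by positivity) (by positivity), mul_assoc,
        ← Real.rpow_add' (by positivity) (by simp)]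
    have e2 : θ + (1 - θ) = 1 := by ring
    rw [e2, Real.rpow_one, ← Real.rpow_natCast γ₀ 2, ← Real.rpow_mul hγ₀.le]
    have e3 : ((2 : ℕ) : ℝ) * θ = ν / (μ + 1) := by
      rw [hθdef]; push_cast; ring
    rw [e3]
  have hq : γ₀ ^ (-ν / (μ + 1)) = (γ₀ ^ (ν / (μ + 1)))⁻¹ := by
    rw [neg_div, Real.rpow_neg hγ₀.le]
  have hqpos : 0 < γ₀ ^ (ν / (μ + 1)) := Real.rpow_pos_of_pos hγ₀ _
  have hconst : σ ^ 2 * ((‖φ‖ / γ ^ 2) ^ θ * (‖φ‖ / σ ^ 2) ^ (1 - θ))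
      = γ₀ ^ (-ν / (μ + 1)) * ‖φ‖ := by
    rw [Real.div_rpow (norm_nonneg φ) (by positivity),
        Real.div_rpow (norm_nonneg φ) (by positivity),
        div_mul_div_comm, ec, eD, hq]
    field_simp
  calc σ ^ 2 * ‖pow (ν / 2) ψ‖
      ≤ σ ^ 2 * ((‖φ‖ / γ ^ 2) ^ θ * (‖φ‖ / σ ^ 2) ^ (1 - θ)) :=
        mul_le_mul_of_nonneg_left hstep (by positivity)
    _ = γ₀ ^ (-ν / (μ + 1)) * ‖φ‖ := hconst
end
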